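/- arXiv:2006.15225 — 6 statements merged into one kernel-verified Lean document; each statement's English description precedes it below -/
import Mathlib

section
/- For all integers n ≥ 3 and 2 ≤ K ≤ n, the ratio-cut polytope RCut^K_n is full-dimensional in ℝ^{n(n−1)/2}: its affine hull is all of ℝ^{n(n−1)/2}, i.e., dim(RCut^K_n) = n(n−1)/2. -/
/-- Index set for the pairs `1 ≤ i < j ≤ n`. -/
abbrev PairIdx (n : ℕ) := {p : Fin n × Fin n // p.1 < p.2}

/-- The space `ℝ^{n(n-1)/2}` of vectors indexed by pairs `i < j`. -/
abbrev CutSpace (n : ℕ) := PairIdx n → ℝ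

/-- The ratio-cut vector of the partition of `[n]` induced by the cluster
assignment `c : Fin n → Fin K` (such assignments describe exactly the partitions
of `[n]` into at most `K` nonempty clusters): the entry at a pair `i < j` is
`1/|Γ|` if `i, j` lie in the same cluster `Γ` and `0` otherwise. -/
noncomputable def cutVec (n K : ℕ) (c : Fin n → Fin K) : CutSpace n := fun p =>
  if c p.1.1 = c p.1.2 then
    (1 : ℝ) / ((Finset.univ.filter fun i => c i = c p.1.1).card : ℝ)
  else 0

/-- The ratio-cut polytope `RCut^K_n`: convex hull of the ratio-cut vectors of all
partitions of `[n]` into at most `K` nonempty clusters. -/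
def RCut (n K : ℕ) : Set (CutSpace n) :=
  convexHull ℝ {X | ∃ c : Fin n → Fin K, X = cutVec n K c}

/-- `RCut^{=K}_n`: convex hull of the ratio-cut vectors of all partitions of `[n]`
into exactly `K` nonempty clusters (i.e. surjective cluster assignments). -/
def RCutEq (n K : ℕ) : Set (CutSpace n) :=
  convexHull ℝ {X | ∃ c : Fin n → Fin K, Function.Surjective c ∧ X = cutVec n K c}

/-- Symmetric entry access: `ent X i j = X_{ij}` for `i ≠ j`, with `X_{ji} = X_{ij}`. -/
noncomputable def ent {n : ℕ} (X : CutSpace n) (i j : Fin n) : ℝ :=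
  if h : i < j then X ⟨(i, j), h⟩ else if h' : j < i then X ⟨(j, i), h'⟩ else 0

/-- `∑_{i,j ∈ T, i < j} X_{ij}`. -/
noncomputable def pairSumOn {n : ℕ} (X : CutSpace n) (T : Finset (Fin n)) : ℝ :=
  ∑ p : PairIdx n, if p.1.1 ∈ T ∧ p.1.2 ∈ T then X p else 0

/-- The polyhedral relaxation `RMet^K_n` of the ratio-cut polytope, cut out by the
facet-defining inequalities of Propositions 2-4 of the paper. -/
def RMet (n K : ℕ) : Set (CutSpace n) :=
  {X | ((n : ℝ) - K) / 2 ≤ ∑ p : PairIdx n, X p ∧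
    (∀ l : Fin n, ∀ T : Finset (Fin n), l ∉ T → 2 ≤ T.card → T.card ≤ K →
      2 * ∑ j ∈ T, ent X l j + ∑ j ∈ Finset.univ \ insert l T, ent X l j
        ≤ 1 + pairSumOn X T) ∧
    ∀ p : PairIdx n, 0 ≤ X p}

/-- The polyhedral relaxation `RMet^{=K}_n`: same constraints as `RMet^K_n` with the
first inequality replaced by an equality. -/
def RMetEq (n K : ℕ) : Set (CutSpace n) :=
  {X | (∑ p : PairIdx n, X p = ((n : ℝ) - K) / 2) ∧
    (∀ l : Fin n, ∀ T : Finset (Fin n), l ∉ T → 2 ≤ T.card → T.card ≤ K →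
      2 * ∑ j ∈ T, ent X l j + ∑ j ∈ Finset.univ \ insert l T, ent X l j
        ≤ 1 + pairSumOn X T) ∧
    ∀ p : PairIdx n, 0 ≤ X p}

noncomputable def cS (n K : ℕ) (hK : 2 ≤ K) (S : Finset (Fin n)) : Fin n → Fin K :=
  fun i => if i ∈ S then ⟨0, by omega⟩ else ⟨1, by omega⟩

lemma cS_filter (n K : ℕ) (hK : 2 ≤ K) (S : Finset (Fin n)) (i : Fin n) :
    (Finset.univ.filter fun a => cS n K hK S a = cS n K hK S i)
      = if i ∈ S then S else Sᶜ := by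
  have h01 : (⟨0, by omega⟩ : Fin K) ≠ ⟨1, by omega⟩ := by simp [Fin.ext_iff]
  ext a
  by_cases hi : i ∈ S <;> by_cases ha : a ∈ S <;>
    simp [cS, hi, ha, h01, h01.symm]

lemma cutVec_cS (n K : ℕ) (hK : 2 ≤ K) (S : Finset (Fin n)) (p : PairIdx n) :
    cutVec n K (cS n K hK S) p =
      if p.1.1 ∈ S then (if p.1.2 ∈ S then ((S.card : ℝ))⁻¹ else 0)
      else (if p.1.2 ∈ S then 0 else ((Sᶜ.card : ℝ))⁻¹) := by
  have h01 : (⟨0, by omega⟩ : Fin K) ≠ ⟨1, by omega⟩ := by simp [Fin.ext_iff]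
  rcases p with ⟨⟨u, v⟩, huv⟩
  simp only [cutVec, cS_filter n K hK S]
  by_cases hu : u ∈ S <;> by_cases hv : v ∈ S <;>
    simp [cS, hu, hv, h01, h01.symm, one_div]

lemma single_mem (n K : ℕ) (hn : 3 ≤ n) (hK : 2 ≤ K) (p : PairIdx n) :
    Pi.single p (1 : ℝ) ∈
      vectorSpan ℝ {X : CutSpace n | ∃ c : Fin n → Fin K, X = cutVec n K c} := by
  set S₀ : Set (CutSpace n) := {X | ∃ c : Fin n → Fin K, X = cutVec n K c} with hS₀
  obtain ⟨⟨i, j⟩, hij⟩ := p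
  have hab : i ≠ j := ne_of_lt hij
  set O := cutVec n K (cS n K hK ∅) with hO
  set A := cutVec n K (cS n K hK {i, j}) with hA
  set B := cutVec n K (cS n K hK {i}) with hB
  set C := cutVec n K (cS n K hK {j}) with hC
  have hOm : O ∈ S₀ := ⟨_, rfl⟩
  have hAm : A ∈ S₀ := ⟨_, rfl⟩
  have hBm : B ∈ S₀ := ⟨_, rfl⟩
  have hCm : C ∈ S₀ := ⟨_, rfl⟩
  set α : ℝ := 2 * ((n : ℝ) - 2) / n with hα
  set β : ℝ := -(2 * ((n : ℝ) - 1) / n) with hβ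
  have hmem : α • (A - O) + β • (B - O) + β • (C - O) ∈ vectorSpan ℝ S₀ := by
    have h1 : A - O ∈ vectorSpan ℝ S₀ := vsub_mem_vectorSpan ℝ hAm hOm
    have h2 : B - O ∈ vectorSpan ℝ S₀ := vsub_mem_vectorSpan ℝ hBm hOm
    have h3 : C - O ∈ vectorSpan ℝ S₀ := vsub_mem_vectorSpan ℝ hCm hOm
    exact Submodule.add_mem _ (Submodule.add_mem _ (Submodule.smul_mem _ _ h1)
      (Submodule.smul_mem _ _ h2)) (Submodule.smul_mem _ _ h3)
  have hn3 : (3 : ℝ) ≤ (n : ℝ) := by exact_mod_cast hn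
  have hn0 : (n : ℝ) ≠ 0 := by linarith
  have hn1 : (n : ℝ) - 1 ≠ 0 := by linarith
  have hn2 : (n : ℝ) - 2 ≠ 0 := by linarith
  -- card facts
  have cO : (((∅ : Finset (Fin n))ᶜ.card : ℝ)) = (n : ℝ) := by
    simp [Finset.card_compl]
  have cB : ((({i} : Finset (Fin n)).card : ℝ)) = 1 := by simp
  have cBc : ((({i} : Finset (Fin n))ᶜ.card : ℝ)) = (n : ℝ) - 1 := by
    have h : ({i} : Finset (Fin n))ᶜ.card = n - 1 := by
      rw [Finset.card_compl, Finset.card_singleton, Fintype.card_fin]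
    rw [h, Nat.cast_sub (by omega)]; norm_num
  have cC : ((({j} : Finset (Fin n)).card : ℝ)) = 1 := by simp
  have cCc : ((({j} : Finset (Fin n))ᶜ.card : ℝ)) = (n : ℝ) - 1 := by
    have h : ({j} : Finset (Fin n))ᶜ.card = n - 1 := by
      rw [Finset.card_compl, Finset.card_singleton, Fintype.card_fin]
    rw [h, Nat.cast_sub (by omega)]; norm_num
  have cA : ((({i, j} : Finset (Fin n)).card : ℝ)) = 2 := by
    rw [Finset.card_pair hab]; norm_num
  have cAc : ((({i, j} : Finset (Fin n))ᶜ.card : ℝ)) = (n : ℝ) - 2 := by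
    have h : ({i, j} : Finset (Fin n))ᶜ.card = n - 2 := by
      rw [Finset.card_compl, Finset.card_pair hab, Fintype.card_fin]
    rw [h, Nat.cast_sub (by omega)]; norm_num
  have heq : Pi.single (⟨(i, j), hij⟩ : PairIdx n) (1 : ℝ)
      = α • (A - O) + β • (B - O) + β • (C - O) := by
    funext q
    obtain ⟨⟨u, v⟩, huv⟩ := q
    have huvne : u ≠ v := ne_of_lt huv
    have hOq : O ⟨(u, v), huv⟩ = (n : ℝ)⁻¹ := by
      rw [hO, cutVec_cS]; simp [cO]
    have hiff : ((⟨(u, v), huv⟩ : PairIdx n) = ⟨(i, j), hij⟩) ↔ (u = i ∧ v = j) := by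
      simp [Subtype.ext_iff, Prod.ext_iff]
    have hsingle : (Pi.single (⟨(i, j), hij⟩ : PairIdx n) (1 : ℝ) : CutSpace n) ⟨(u, v), huv⟩
        = if u = i ∧ v = j then 1 else 0 := by
      rw [Pi.single_apply]
      simp only [hiff]
    simp only [Pi.add_apply, Pi.smul_apply, Pi.sub_apply, smul_eq_mul, hOq, hsingle,
      hA, hB, hC, cutVec_cS]
    simp only [Finset.mem_insert, Finset.mem_singleton, cA, cAc, cB, cBc, cC, cCc]
    have hba : j ≠ i := Ne.symm hab
    by_cases hui : u = i
    · by_cases hvj : v = j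
      · simp only [hui, hvj, true_or, or_true, if_true, and_self, true_and, hab, hba,
          if_false, if_neg hba, if_neg hab]
        rw [hα, hβ]; field_simp; ring
      · have hvi : v ≠ i := fun h => huvne (hui.trans h.symm)
        simp only [hui, hvj, hvi, hab, hba, true_or, or_false, if_true, if_false, and_false,
          eq_self_iff_true, true_and, if_neg hba, if_neg hab, if_neg hvi, if_neg hvj]
        rw [hα, hβ]; field_simp; ring
    · by_cases huj : u = j
      · have hvj : v ≠ j := fun h => huvne (huj.trans h.symm)
        have hvi : v ≠ i := by
          intro h
          exact absurd (h ▸ huj ▸ huv) (asymm hij)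
        simp only [hui, huj, hvj, hvi, hab, hba, or_true, or_false, if_true, if_false,
          false_and, eq_self_iff_true, if_neg hba, if_neg hab, if_neg hvi, if_neg hvj,
          if_neg hui]
        rw [hα, hβ]; field_simp; ring
      · by_cases hvi : v = i
        · have hvj : v ≠ j := fun h => hab (hvi.symm.trans h)
          simp only [hui, huj, hvi, hvj, hab, hba, or_false, or_true, true_or, if_true,
            if_false, false_and, eq_self_iff_true, false_or, if_neg hui, if_neg huj,
            if_neg hab, if_neg hba]
          rw [hα, hβ]; field_simp; ring
        · by_cases hvj : v = j
          · simp only [hui, huj, hvi, hvj, hab, hba, or_false, or_true, if_true, if_false,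
              false_and, eq_self_iff_true, false_or, if_neg hui, if_neg huj, if_neg hab,
              if_neg hba]
            rw [hα, hβ]; field_simp; ring
          · simp only [hui, huj, hvi, hvj, or_self, if_false, false_and, false_or,
              if_neg hui, if_neg huj, if_neg hvi, if_neg hvj]
            rw [hα, hβ]; field_simp; ring
  rw [heq]; exact hmem
lemma card_pairIdx (n : ℕ) : Fintype.card (PairIdx n) = n * (n - 1) / 2 := by
  have e : PairIdx n ≃ Σ j : Fin n, Fin j.val :=
    { toFun := fun p => ⟨p.1.2, ⟨p.1.1, p.2⟩⟩
      invFun := fun s => ⟨(⟨s.2.1, lt_trans s.2.2 s.1.2⟩, s.1), s.2.2⟩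
      left_inv := fun p => rfl
      right_inv := fun s => rfl }
  rw [Fintype.card_congr e, Fintype.card_sigma]
  simp only [Fintype.card_fin]
  rw [Fin.sum_univ_eq_sum_range (fun i => i) n]
  have := Finset.sum_range_id_mul_two n
  omega


/-- For all integers n ≥ 3 and 2 ≤ K ≤ n, the ratio-cut polytope
`RCut^K_n` is full-dimensional in ℝ^{n(n−1)/2}: its affine hull is the whole
space, i.e. dim(RCut^K_n) = n(n−1)/2. -/
theorem stmt0 (n K : ℕ) (hn : 3 ≤ n) (hK2 : 2 ≤ K) (hKn : K ≤ n) :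
    affineSpan ℝ (RCut n K) = ⊤ ∧
    Module.finrank ℝ (affineSpan ℝ (RCut n K)).direction = n * (n - 1) / 2 := by
  have htop : affineSpan ℝ (RCut n K) = ⊤ := by
    rw [RCut, affineSpan_convexHull]
    have hne : ({X : CutSpace n | ∃ c : Fin n → Fin K, X = cutVec n K c}).Nonempty :=
      ⟨cutVec n K (cS n K hK2 ∅), _, rfl⟩
    rw [AffineSubspace.affineSpan_eq_top_iff_vectorSpan_eq_top_of_nonempty ℝ _ _ hne]
    rw [Submodule.eq_top_iff']
    intro x
    have hs : ∀ p : PairIdx n, x p • (Pi.single p (1 : ℝ) : CutSpace n) = Pi.single p (x p) :=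
      fun p => by rw [← Pi.single_smul, smul_eq_mul, mul_one]
    have hx : x = ∑ p : PairIdx n, x p • (Pi.single p (1 : ℝ) : CutSpace n) := by
      simp_rw [hs]
      exact (Finset.univ_sum_single x).symm
    rw [hx]
    exact Submodule.sum_mem _ fun p _ => Submodule.smul_mem _ _ (single_mem n K hn hK2 p)
  refine ⟨htop, ?_⟩
  rw [htop, AffineSubspace.direction_top, finrank_top, Module.finrank_fintype_fun_eq_card,
    card_pairIdx]
end

section
/- For all integers n ≥ 3 and 2 ≤ K ≤ n, every ratio-cut vector X of a partition of [n] into at most K nonempty clusters satisfies ∑_{1≤i<j≤n} X_{ij} ≥ (n−K)/2 (hence the inequality holds on all of RCut^K_n), and equality holds if and only if the partition has exactly K nonempty clusters. -/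
open Finset

lemma sum_cutVec_eq (n K : ℕ) (c : Fin n → Fin K) :
    ∑ p : PairIdx n, cutVec n K c p
      = ((n : ℝ) - (Finset.univ.image c).card) / 2 := by
  classical
  set g : Fin n × Fin n → ℝ := fun p =>
    if c p.1 = c p.2 then (1:ℝ) / ((univ.filter fun i => c i = c p.1).card : ℝ) else 0 with hg
  have hmpos : ∀ k : Fin K, k ∈ univ.image c →
      (0:ℝ) < ((univ.filter fun i => c i = k).card : ℝ) := by
    intro k hk
    obtain ⟨i, _, hi⟩ := mem_image.1 hk
    have : i ∈ univ.filter fun j => c j = k := by simp [hi]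
    exact_mod_cast Finset.card_pos.2 ⟨i, this⟩
  have hsym : ∀ a b : Fin n, g (a, b) = g (b, a) := by
    intro a b
    by_cases h : c a = c b
    · simp only [hg, if_pos h, if_pos h.symm, h]
    · simp only [hg, if_neg h, if_neg (fun h' : c b = c a => h h'.symm)]
  have hsub : ∑ p : PairIdx n, cutVec n K c p
      = ∑ p ∈ univ.filter (fun p : Fin n × Fin n => p.1 < p.2), g p := by
    have h := Finset.sum_subtype (p := fun q : Fin n × Fin n => q.1 < q.2)
        (F := inferInstanceAs (Fintype (PairIdx n)))
        (univ.filter fun q : Fin n × Fin n => q.1 < q.2) (fun x => by simp) g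
    exact h.symm
  have hrow : ∀ i : Fin n, ∑ j, g (i, j) = 1 := by
    intro i
    have hmem : c i ∈ univ.image c := mem_image.2 ⟨i, mem_univ i, rfl⟩
    have hpos := hmpos (c i) hmem
    have h1 : ∑ j, g (i, j) = ∑ j ∈ univ.filter (fun j => c j = c i),
        (1:ℝ) / ((univ.filter fun t => c t = c i).card : ℝ) := by
      rw [Finset.sum_filter]
      apply Finset.sum_congr rfl
      intro j _
      by_cases h : c j = c i
      · simp only [hg]; rw [if_pos h, if_pos h.symm]
      · simp only [hg]; rw [if_neg h, if_neg (fun h' : c i = c j => h h'.symm)]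
    rw [h1, Finset.sum_const, nsmul_eq_mul]
    field_simp
  have hS : ∑ p : Fin n × Fin n, g p = (n : ℝ) := by
    rw [Fintype.sum_prod_type]
    simp [hrow]
  have hD : ∑ i : Fin n, g (i, i) = ((univ.image c).card : ℝ) := by
    have : ∀ i : Fin n, g (i, i) = (1:ℝ) / ((univ.filter fun j => c j = c i).card : ℝ) := by
      intro i; simp [hg]
    rw [Finset.sum_congr rfl (fun i _ => this i)]
    rw [← Finset.sum_fiberwise_of_maps_to (g := c) (t := univ.image c)
        (fun i _ => mem_image.2 ⟨i, mem_univ i, rfl⟩)]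
    rw [Finset.sum_congr rfl (fun k hk => ?_), Finset.sum_const, nsmul_eq_mul, mul_one]
    have : ∀ i ∈ univ.filter fun i => c i = k,
        (1:ℝ) / ((univ.filter fun j => c j = c i).card : ℝ)
          = (1:ℝ) / ((univ.filter fun j => c j = k).card : ℝ) := by
      intro i hi
      have := (mem_filter.1 hi).2
      rw [this]
    rw [Finset.sum_congr rfl this, Finset.sum_const, nsmul_eq_mul]
    have hpos := hmpos k hk
    field_simp
  -- split the full sum
  have hsplit : ∑ p : Fin n × Fin n, g p
      = 2 * (∑ p ∈ univ.filter (fun p : Fin n × Fin n => p.1 < p.2), g p)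
        + ∑ i : Fin n, g (i, i) := by
    rw [← Finset.sum_filter_add_sum_filter_not univ (fun p : Fin n × Fin n => p.1 < p.2) g]
    have h2 : (univ.filter fun p : Fin n × Fin n => ¬ p.1 < p.2)
        = (univ.filter fun p : Fin n × Fin n => p.2 < p.1) ∪
          (univ.filter fun p : Fin n × Fin n => p.1 = p.2) := by
      ext p
      simp only [mem_filter, mem_union, mem_univ, true_and]
      constructor
      · intro h; rcases lt_trichotomy p.1 p.2 with h' | h' | h'
        · exact absurd h' h
        · exact Or.inr h'
        · exact Or.inl h'
      · rintro (h | h)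
        · exact not_lt_of_gt h
        · exact h ▸ lt_irrefl _
    have hdisj : Disjoint (univ.filter fun p : Fin n × Fin n => p.2 < p.1)
        (univ.filter fun p : Fin n × Fin n => p.1 = p.2) := by
      rw [Finset.disjoint_filter]
      intro p _ h h'
      exact absurd (h' ▸ h) (lt_irrefl _)
    rw [h2, Finset.sum_union hdisj]
    have hswap : ∑ p ∈ univ.filter (fun p : Fin n × Fin n => p.2 < p.1), g p
        = ∑ p ∈ univ.filter (fun p : Fin n × Fin n => p.1 < p.2), g p := by
      apply Finset.sum_nbij' (fun p => Prod.swap p) (fun p => Prod.swap p)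
      · intro p hp; simp only [mem_filter, mem_univ, true_and] at hp ⊢; exact hp
      · intro p hp; simp only [mem_filter, mem_univ, true_and] at hp ⊢; exact hp
      · intro p _; exact Prod.swap_swap p
      · intro p _; exact Prod.swap_swap p
      · intro p _; exact (hsym p.1 p.2).symm ▸ (hsym p.2 p.1)
    have hdiag : ∑ p ∈ univ.filter (fun p : Fin n × Fin n => p.1 = p.2), g p
        = ∑ i : Fin n, g (i, i) := by
      apply Finset.sum_nbij' (fun p => p.1) (fun i => (i, i))
      · intro p hp; exact mem_univ _
      · intro i _; simp
      · intro p hp; have := (mem_filter.1 hp).2; ext <;> simp [this]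
      · intro i _; rfl
      · intro p hp
        have h12 := (mem_filter.1 hp).2
        have hpe : p = (p.1, p.1) := Prod.ext rfl h12.symm
        rw [hpe]
    rw [hswap, hdiag]; ring
  rw [hsub]
  rw [hS, hD] at hsplit
  linarith

/-- every ratio-cut vector of a partition of [n] into at most K
nonempty clusters satisfies ∑_{i<j} X_{ij} ≥ (n−K)/2 (hence the inequality holds
on all of RCut^K_n), with equality iff the partition has exactly K nonempty
clusters (iff the cluster assignment is surjective). -/
theorem stmt1 (n K : ℕ) (hn : 3 ≤ n) (hK2 : 2 ≤ K) (hKn : K ≤ n) :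
    (∀ c : Fin n → Fin K, ((n : ℝ) - K) / 2 ≤ ∑ p : PairIdx n, cutVec n K c p) ∧
    (∀ X ∈ RCut n K, ((n : ℝ) - K) / 2 ≤ ∑ p : PairIdx n, X p) ∧
    (∀ c : Fin n → Fin K,
      (∑ p : PairIdx n, cutVec n K c p = ((n : ℝ) - K) / 2) ↔
        Function.Surjective c) := by
  have hle : ∀ c : Fin n → Fin K, (univ.image c).card ≤ K := by
    intro c
    calc (univ.image c).card ≤ (univ : Finset (Fin K)).card := card_le_card (subset_univ _)
    _ = K := by simp
  have h1 : ∀ c : Fin n → Fin K,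
      ((n : ℝ) - K) / 2 ≤ ∑ p : PairIdx n, cutVec n K c p := by
    intro c
    rw [sum_cutVec_eq]
    have : ((univ.image c).card : ℝ) ≤ K := by exact_mod_cast hle c
    linarith
  refine ⟨h1, ?_, ?_⟩
  · have hlin : IsLinearMap ℝ (fun X : CutSpace n => ∑ p : PairIdx n, X p) :=
      ⟨fun x y => Finset.sum_add_distrib, fun r x => by simp [Finset.mul_sum]⟩
    intro X hX
    refine convexHull_min ?_ (convex_halfSpace_ge hlin _) hX
    rintro Y ⟨c, rfl⟩
    exact h1 c
  · intro c
    rw [sum_cutVec_eq]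
    have hKcast : ((n : ℝ) - (univ.image c).card) / 2 = ((n : ℝ) - K) / 2
        ↔ ((univ.image c).card : ℝ) = K := by constructor <;> intro h <;> linarith
    rw [hKcast]
    rw [show ((univ.image c).card : ℝ) = (K : ℝ) ↔ (univ.image c).card = K from
      Nat.cast_inj]
    constructor
    · intro h k
      have huniv : univ.image c = univ :=
        (Finset.card_eq_iff_eq_univ _).mp (by simpa using h)
      have : k ∈ univ.image c := huniv ▸ mem_univ k
      obtain ⟨i, _, hi⟩ := mem_image.1 this
      exact ⟨i, hi⟩
    · intro hs
      have : univ.image c = univ := by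
        apply Finset.eq_univ_of_forall
        intro k
        obtain ⟨i, hi⟩ := hs k
        exact mem_image.2 ⟨i, mem_univ i, hi⟩
      rw [this]; simp
end

section
/- For all integers n ≥ 3 and 2 ≤ K ≤ n, the inequality ∑_{1≤i<j≤n} X_{ij} ≥ (n−K)/2 defines a facet of RCut^K_n — that is, the face {X ∈ RCut^K_n : ∑_{1≤i<j≤n} X_{ij} = (n−K)/2} has affine dimension n(n−1)/2 − 1 — if and only if K ≤ n−1. -/
namespace RC

noncomputable def fsum (n : ℕ) : CutSpace n →ₗ[ℝ] ℝ where
  toFun X := ∑ p, X p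
  map_add' X Y := by simp [Finset.sum_add_distrib]
  map_smul' r X := by simp [Finset.mul_sum]

def Vset (n K : ℕ) : Set (CutSpace n) :=
  {X | ∃ c : Fin n → Fin K, Function.Surjective c ∧ X = cutVec n K c}

noncomputable def WS (n K : ℕ) : Submodule ℝ (CutSpace n) := vectorSpan ℝ (Vset n K)

lemma vsub_mem_WS {n K : ℕ} {c c' : Fin n → Fin K} (hc : Function.Surjective c)
    (hc' : Function.Surjective c') : cutVec n K c - cutVec n K c' ∈ WS n K := by
  have := vsub_mem_vectorSpan ℝ (s := Vset n K) ⟨c, hc, rfl⟩ ⟨c', hc', rfl⟩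
  rw [WS]; simpa [vsub_eq_sub] using this

def Eind {n : ℕ} (i j : Fin n) : CutSpace n := fun p =>
  if (p.1.1 = i ∧ p.1.2 = j) ∨ (p.1.1 = j ∧ p.1.2 = i) then 1 else 0

lemma Eind_comm {n : ℕ} (i j : Fin n) : Eind i j = Eind j i := by
  funext p; simp only [Eind]; exact if_congr or_comm rfl rfl

lemma Eind_eq_single {n : ℕ} (i j : Fin n) (h : i < j) :
    Eind i j = Pi.single (⟨(i,j), h⟩ : PairIdx n) 1 := by
  funext p
  obtain ⟨⟨a,b⟩, hab⟩ := p
  have h2 : ¬(a = j ∧ b = i) := by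
    rintro ⟨rfl, rfl⟩; exact absurd (hab.trans h) (lt_irrefl _)
  simp only [Eind, Pi.single_apply, Subtype.mk.injEq, Prod.mk.injEq, or_iff_left h2]

def pmap {n : ℕ} (σ : Equiv.Perm (Fin n)) (p : PairIdx n) : PairIdx n :=
  if h : σ p.1.1 < σ p.1.2 then ⟨(σ p.1.1, σ p.1.2), h⟩
  else ⟨(σ p.1.2, σ p.1.1), by
    have hne : σ p.1.1 ≠ σ p.1.2 := fun he => absurd (σ.injective he) (ne_of_lt p.2)
    exact lt_of_le_of_ne (not_lt.mp h) hne.symm⟩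

lemma card_fiber_comp {n K : ℕ} (σ : Equiv.Perm (Fin n)) (c : Fin n → Fin K) (v : Fin K) :
    (Finset.univ.filter fun i => c (σ i) = v).card
      = (Finset.univ.filter fun i => c i = v).card := by
  apply Finset.card_bij' (fun x _ => σ x) (fun y _ => σ.symm y) <;> intros <;> simp_all

lemma funLeft_cutVec {n K : ℕ} (σ : Equiv.Perm (Fin n)) (c : Fin n → Fin K) :
    LinearMap.funLeft ℝ ℝ (pmap σ) (cutVec n K c) = cutVec n K (c ∘ σ) := by
  funext p
  obtain ⟨⟨a,b⟩, hab⟩ := p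
  rw [LinearMap.funLeft_apply]
  by_cases hlt : σ a < σ b
  · simp only [cutVec, pmap, dif_pos hlt, Function.comp_apply]
    by_cases h : c (σ a) = c (σ b)
    · rw [if_pos h, if_pos h, card_fiber_comp]
    · rw [if_neg h, if_neg h]
  · simp only [cutVec, pmap, dif_neg hlt, Function.comp_apply]
    by_cases h : c (σ a) = c (σ b)
    · rw [if_pos h.symm, if_pos h, card_fiber_comp, h]
    · rw [if_neg (fun he => h he.symm), if_neg h]

lemma WS_invariant {n K : ℕ} (σ : Equiv.Perm (Fin n)) {X : CutSpace n} (hX : X ∈ WS n K) :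
    LinearMap.funLeft ℝ ℝ (pmap σ) X ∈ WS n K := by
  have hmap : Submodule.map (LinearMap.funLeft ℝ ℝ (pmap σ)) (WS n K) ≤ WS n K := by
    rw [WS, vectorSpan_def, Submodule.map_span]
    apply Submodule.span_le.2
    rintro y ⟨x, hx, rfl⟩
    rcases hx with ⟨u, hu, v, hv, rfl⟩
    rcases hu with ⟨c, hc, rfl⟩; rcases hv with ⟨c', hc', rfl⟩
    apply Submodule.subset_span
    have heq : (LinearMap.funLeft ℝ ℝ (pmap σ)) (cutVec n K c -ᵥ cutVec n K c')
        = cutVec n K (c ∘ σ) -ᵥ cutVec n K (c' ∘ σ) := by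
      rw [vsub_eq_sub, vsub_eq_sub, map_sub, funLeft_cutVec, funLeft_cutVec]
    rw [heq]
    have h1 : cutVec n K (c ∘ σ) ∈ Vset n K := ⟨_, hc.comp σ.surjective, rfl⟩
    have h2 : cutVec n K (c' ∘ σ) ∈ Vset n K := ⟨_, hc'.comp σ.surjective, rfl⟩
    exact Set.vsub_mem_vsub h1 h2
  exact hmap ⟨X, hX, rfl⟩

lemma funLeft_Eind {n : ℕ} (σ : Equiv.Perm (Fin n)) (a b : Fin n) :
    LinearMap.funLeft ℝ ℝ (pmap σ) (Eind a b) = Eind (σ.symm a) (σ.symm b) := by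
  funext p
  obtain ⟨⟨x,y⟩, hxy⟩ := p
  rw [LinearMap.funLeft_apply]
  simp only [pmap]
  split_ifs with h
  · simp only [Eind]
    refine if_congr ?_ rfl rfl
    simp only [Equiv.eq_symm_apply]
    try tauto
  · simp only [Eind]
    refine if_congr ?_ rfl rfl
    simp only [Equiv.eq_symm_apply]
    try tauto

lemma exists_perm {n : ℕ} (hn : 3 ≤ n) (i j k : Fin n) (hij : i ≠ j) (hik : i ≠ k)
    (hjk : j ≠ k) :
    ∃ ρ : Equiv.Perm (Fin n), ρ i = ⟨0, by omega⟩ ∧ ρ j = ⟨1, by omega⟩ ∧ ρ k = ⟨2, by omega⟩ := by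
  set z0 : Fin n := ⟨0, by omega⟩ with hz0
  set z1 : Fin n := ⟨1, by omega⟩ with hz1
  set z2 : Fin n := ⟨2, by omega⟩ with hz2
  have h01 : z0 ≠ z1 := by simp [hz0, hz1, Fin.ext_iff]
  have h02 : z0 ≠ z2 := by simp [hz0, hz2, Fin.ext_iff]
  have h12 : z1 ≠ z2 := by simp [hz1, hz2, Fin.ext_iff]
  set σ1 := Equiv.swap z0 i with hσ1
  have hσ1i : σ1 i = z0 := Equiv.swap_apply_right _ _
  have hj'0 : σ1 j ≠ z0 := fun h => hij (σ1.injective (hσ1i.trans h.symm))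
  set σ2 := Equiv.swap z1 (σ1 j) with hσ2
  have hσ20 : σ2 z0 = z0 := Equiv.swap_apply_of_ne_of_ne h01 (Ne.symm hj'0)
  have hσ2j' : σ2 (σ1 j) = z1 := Equiv.swap_apply_right _ _
  have hk'0 : σ1 k ≠ z0 := fun h => hik (σ1.injective (hσ1i.trans h.symm))
  have hk''0 : σ2 (σ1 k) ≠ z0 := fun h => hk'0 (σ2.injective (h.trans hσ20.symm))
  have hk''1 : σ2 (σ1 k) ≠ z1 := by
    intro h
    exact hjk (σ1.injective (σ2.injective (h.trans hσ2j'.symm))).symm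
  set σ3 := Equiv.swap z2 (σ2 (σ1 k)) with hσ3
  have hσ30 : σ3 z0 = z0 := Equiv.swap_apply_of_ne_of_ne h02 (Ne.symm hk''0)
  have hσ31 : σ3 z1 = z1 := Equiv.swap_apply_of_ne_of_ne h12 (Ne.symm hk''1)
  have hσ3k : σ3 (σ2 (σ1 k)) = z2 := Equiv.swap_apply_right _ _
  refine ⟨(σ1.trans σ2).trans σ3, ?_, ?_, ?_⟩
  · simp only [Equiv.trans_apply]; rw [hσ1i, hσ20, hσ30]
  · simp only [Equiv.trans_apply]; rw [hσ2j', hσ31]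
  · simp only [Equiv.trans_apply]; rw [hσ3k]

lemma sum_pair_half {n : ℕ} (h : Fin n → Fin n → ℝ)
    (hsymm : ∀ i j, h i j = h j i) (hdiag : ∀ i, h i i = 0) :
    ∑ p : PairIdx n, h p.1.1 p.1.2 = (∑ i : Fin n, ∑ j : Fin n, h i j) / 2 := by
  classical
  have hsub : ∑ p : PairIdx n, h p.1.1 p.1.2
      = ∑ q ∈ Finset.univ.filter (fun q : Fin n × Fin n => q.1 < q.2), h q.1 q.2 := by
    rw [← Finset.sum_subtype (Finset.univ.filter (fun q : Fin n × Fin n => q.1 < q.2))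
      (by simp) (fun q : Fin n × Fin n => h q.1 q.2)]
  have hdouble : ∑ i : Fin n, ∑ j : Fin n, h i j
      = ∑ q ∈ (Finset.univ : Finset (Fin n × Fin n)), h q.1 q.2 := by
    rw [← Finset.univ_product_univ, Finset.sum_product]
  have hsplit := Finset.sum_filter_add_sum_filter_not (Finset.univ : Finset (Fin n × Fin n))
    (fun q => q.1 < q.2) (fun q => h q.1 q.2)
  have hsplit2 := Finset.sum_filter_add_sum_filter_not
    (Finset.univ.filter (fun q : Fin n × Fin n => ¬ q.1 < q.2))
    (fun q => q.2 < q.1) (fun q => h q.1 q.2)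
  have heq1 : (Finset.univ.filter (fun q : Fin n × Fin n => ¬ q.1 < q.2)).filter
      (fun q => q.2 < q.1) = Finset.univ.filter (fun q : Fin n × Fin n => q.2 < q.1) := by
    rw [Finset.filter_filter]
    apply Finset.filter_congr
    intro q _
    constructor
    · exact fun hq => hq.2
    · exact fun hq => ⟨not_lt.2 hq.le, hq⟩
  have heq2 : ∑ q ∈ (Finset.univ.filter (fun q : Fin n × Fin n => ¬ q.1 < q.2)).filter
      (fun q => ¬ q.2 < q.1), h q.1 q.2 = 0 := by
    apply Finset.sum_eq_zero
    intro q hq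
    simp only [Finset.mem_filter] at hq
    have : q.1 = q.2 := le_antisymm (not_lt.1 hq.2) (not_lt.1 hq.1.2)
    rw [this, hdiag]
  have heq3 : ∑ q ∈ Finset.univ.filter (fun q : Fin n × Fin n => q.2 < q.1), h q.1 q.2
      = ∑ q ∈ Finset.univ.filter (fun q : Fin n × Fin n => q.1 < q.2), h q.1 q.2 := by
    apply Finset.sum_nbij' (fun q => Prod.swap q) (fun q => Prod.swap q) <;>
      simp [hsymm, Finset.mem_filter]
  rw [hsub, hdouble, ← hsplit, ← hsplit2, heq1, heq2, heq3]
  ring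

lemma sum_cutVec_surj {n K : ℕ} (c : Fin n → Fin K) (hc : Function.Surjective c) :
    ∑ p : PairIdx n, cutVec n K c p = ((n : ℝ) - K) / 2 := by
  classical
  set s : Fin n → ℕ := fun i => (Finset.univ.filter fun x => c x = c i).card with hs
  have hmem : ∀ i, i ∈ Finset.univ.filter fun x => c x = c i := by
    intro i; simp
  have hspos : ∀ i, 0 < s i := fun i => Finset.card_pos.2 ⟨i, hmem i⟩
  have h1 : ∀ p : PairIdx n, cutVec n K c p
      = (fun i j => if c i = c j ∧ i ≠ j then 1 / (s i : ℝ) else 0) p.1.1 p.1.2 := by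
    intro p
    simp only [cutVec]
    have hne : p.1.1 ≠ p.1.2 := ne_of_lt p.2
    by_cases h : c p.1.1 = c p.1.2
    · rw [if_pos h, if_pos ⟨h, hne⟩]
    · rw [if_neg h, if_neg (fun hh => h hh.1)]
  have hsymm : ∀ i j, (if c i = c j ∧ i ≠ j then 1 / (s i : ℝ) else 0)
      = (if c j = c i ∧ j ≠ i then 1 / (s j : ℝ) else 0) := by
    intro i j
    by_cases h : c i = c j ∧ i ≠ j
    · rw [if_pos h, if_pos ⟨h.1.symm, h.2.symm⟩]
      have : s i = s j := by
        simp only [hs]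
        congr 1
        apply Finset.filter_congr
        intro x _
        rw [h.1]
      rw [this]
    · rw [if_neg h, if_neg (fun hh => h ⟨hh.1.symm, hh.2.symm⟩)]
  calc ∑ p : PairIdx n, cutVec n K c p
      = ∑ p : PairIdx n, (fun i j => if c i = c j ∧ i ≠ j then 1 / (s i : ℝ) else 0) p.1.1 p.1.2 := by
        exact Finset.sum_congr rfl (fun p _ => h1 p)
    _ = (∑ i : Fin n, ∑ j : Fin n, if c i = c j ∧ i ≠ j then 1 / (s i : ℝ) else 0) / 2 := by
        apply sum_pair_half _ hsymm
        intro i; simp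
    _ = ((n : ℝ) - K) / 2 := by
        congr 1
        have hinner : ∀ i : Fin n, (∑ j : Fin n, if c i = c j ∧ i ≠ j then 1 / (s i : ℝ) else 0)
            = 1 - 1 / (s i : ℝ) := by
          intro i
          rw [Finset.sum_ite, Finset.sum_const_zero, add_zero, Finset.sum_const]
          have hcard : (Finset.univ.filter fun j => c i = c j ∧ i ≠ j).card = s i - 1 := by
            have : Finset.univ.filter (fun j => c i = c j ∧ i ≠ j)
                = (Finset.univ.filter fun x => c x = c i).erase i := by
              ext x
              simp only [Finset.mem_filter, Finset.mem_erase, Finset.mem_univ, true_and]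
              constructor
              · rintro ⟨h1', h2'⟩; exact ⟨fun hh => h2' hh.symm, h1'.symm⟩
              · rintro ⟨h1', h2'⟩; exact ⟨h2'.symm, fun hh => h1' hh.symm⟩
            rw [this, Finset.card_erase_of_mem (hmem i)]
          rw [hcard, nsmul_eq_mul, Nat.cast_sub (hspos i)]
          have : (s i : ℝ) ≠ 0 := Nat.cast_ne_zero.2 (hspos i).ne'
          field_simp
          norm_num
        rw [Finset.sum_congr rfl (fun i _ => hinner i), Finset.sum_sub_distrib]
        have hK : ∑ i : Fin n, 1 / (s i : ℝ) = K := by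
          rw [← Finset.sum_fiberwise Finset.univ c (fun i => 1 / (s i : ℝ))]
          have : ∀ v : Fin K, ∑ i ∈ Finset.univ.filter (fun i => c i = v), 1 / (s i : ℝ) = 1 := by
            intro v
            have hsv : ∀ i ∈ Finset.univ.filter (fun i => c i = v), (1 : ℝ) / (s i : ℝ)
                = 1 / ((Finset.univ.filter fun x => c x = v).card : ℝ) := by
              intro i hi
              simp only [Finset.mem_filter] at hi
              rw [hs]
              simp only
              rw [hi.2]
            rw [Finset.sum_congr rfl hsv, Finset.sum_const, nsmul_eq_mul]
            obtain ⟨x, hx⟩ := hc v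
            have hpos : 0 < (Finset.univ.filter fun x => c x = v).card :=
              Finset.card_pos.2 ⟨x, by simp [hx]⟩
            field_simp
          rw [Finset.sum_congr rfl (fun v _ => this v), Finset.sum_const, Finset.card_univ,
            Fintype.card_fin, nsmul_eq_mul, mul_one]
        rw [hK]
        simp

def pairEquiv (n : ℕ) : PairIdx n ≃ Σ j : Fin n, Fin j.1 where
  toFun p := ⟨p.1.2, ⟨p.1.1.1, p.2⟩⟩
  invFun x := ⟨(⟨x.2.1, lt_trans x.2.2 x.1.2⟩, x.1), x.2.2⟩
  left_inv p := rfl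
  right_inv x := rfl

lemma card_pairIdx (n : ℕ) : Fintype.card (PairIdx n) = n * (n - 1) / 2 := by
  rw [Fintype.card_congr (pairEquiv n), Fintype.card_sigma]
  simp only [Fintype.card_fin]
  rw [Fin.sum_univ_eq_sum_range (fun i => i) n]
  have := Finset.sum_range_id_mul_two n
  omega

def cS {n : ℕ} (S : Finset (Fin n)) : Fin n → Fin 2 := fun x => if x ∈ S then 0 else 1

lemma cS_surj {n : ℕ} (S : Finset (Fin n)) (a b : Fin n) (ha : a ∈ S) (hb : b ∉ S) :
    Function.Surjective (cS S) := by
  intro v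
  fin_cases v
  · exact ⟨a, by simp [cS, ha]⟩
  · exact ⟨b, by simp [cS, hb]⟩

lemma cutVec_cS {n : ℕ} (S : Finset (Fin n)) (p : PairIdx n) :
    cutVec n 2 (cS S) p = if (p.1.1 ∈ S ↔ p.1.2 ∈ S) then
      (if p.1.1 ∈ S then 1 / (S.card : ℝ) else 1 / ((n - S.card : ℕ) : ℝ)) else 0 := by
  classical
  obtain ⟨⟨a,b⟩, hab⟩ := p
  have hiff0 : ∀ i : Fin n, ((if i ∈ S then (0:Fin 2) else 1) = 0) ↔ i ∈ S := by
    intro i; split_ifs with h <;> simp [h]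
  have hiff1 : ∀ i : Fin n, ((if i ∈ S then (0:Fin 2) else 1) = 1) ↔ ¬ i ∈ S := by
    intro i; split_ifs with h <;> simp [h]
  have hcompl : Finset.univ.filter (fun i : Fin n => ¬ i ∈ S) = Sᶜ := by
    ext x; simp
  have hne01 : ((0:Fin 2) = 1) ↔ False := by decide
  have hne10 : ((1:Fin 2) = 0) ↔ False := by decide
  by_cases ha : a ∈ S <;> by_cases hb : b ∈ S <;>
    simp [cutVec, cS, ha, hb, hiff0, hiff1, hcompl, hne01, hne10,
      Finset.filter_univ_mem, Finset.card_compl]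

lemma baseK2 {n : ℕ} (hn : 3 ≤ n) :
    Eind (⟨0, by omega⟩ : Fin n) ⟨1, by omega⟩ - Eind ⟨0, by omega⟩ ⟨2, by omega⟩ ∈ WS n 2 := by
  classical
  set z0 : Fin n := ⟨0, by omega⟩ with hz0
  set z1 : Fin n := ⟨1, by omega⟩ with hz1
  set z2 : Fin n := ⟨2, by omega⟩ with hz2
  have h01 : z0 ≠ z1 := by simp [hz0, hz1, Fin.ext_iff]
  have h02 : z0 ≠ z2 := by simp [hz0, hz2, Fin.ext_iff]
  have h12 : z1 ≠ z2 := by simp [hz1, hz2, Fin.ext_iff]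
  set Sa : Finset (Fin n) := {z0, z1} with hSa
  set Sb : Finset (Fin n) := {z0, z2} with hSb
  set S1 : Finset (Fin n) := {z1} with hS1
  set S2 : Finset (Fin n) := {z2} with hS2
  have hcardSa : Sa.card = 2 := by
    rw [hSa, hS1, Finset.card_insert_of_notMem (by simp [h01]), Finset.card_singleton]
  have hcardSb : Sb.card = 2 := by
    rw [hSb, hS2, Finset.card_insert_of_notMem (by simp [h02]), Finset.card_singleton]
  have hcardS1 : S1.card = 1 := by rw [hS1, Finset.card_singleton]
  have hcardS2 : S2.card = 1 := by rw [hS2, Finset.card_singleton]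
  have hA : cutVec n 2 (cS Sa) - cutVec n 2 (cS Sb) ∈ WS n 2 :=
    vsub_mem_WS
      (cS_surj Sa z0 z2 (by rw [hSa, hS1]; simp) (by rw [hSa, hS1]; simp [Ne.symm h02, Ne.symm h12]))
      (cS_surj Sb z0 z1 (by rw [hSb, hS2]; simp) (by rw [hSb, hS2]; simp [Ne.symm h01, h12]))
  have hJ : cutVec n 2 (cS S1) - cutVec n 2 (cS S2) ∈ WS n 2 :=
    vsub_mem_WS
      (cS_surj S1 z1 z0 (by rw [hS1]; simp) (by rw [hS1]; simp [h01]))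
      (cS_surj S2 z2 z0 (by rw [hS2]; simp) (by rw [hS2]; simp [h02]))
  have hcombo : ((n:ℝ) - 2) • (cutVec n 2 (cS Sa) - cutVec n 2 (cS Sb))
      - ((n:ℝ) - 1) • (cutVec n 2 (cS S1) - cutVec n 2 (cS S2)) ∈ WS n 2 :=
    Submodule.sub_mem _ (Submodule.smul_mem _ _ hA) (Submodule.smul_mem _ _ hJ)
  have hnR : (3:ℝ) ≤ (n:ℝ) := by exact_mod_cast hn
  have h1ne : (n:ℝ) - 1 ≠ 0 := by linarith
  have h2ne : (n:ℝ) - 2 ≠ 0 := by linarith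
  have hnne : (n:ℝ) ≠ 0 := by linarith
  have key : ((n:ℝ) - 2) • (cutVec n 2 (cS Sa) - cutVec n 2 (cS Sb))
      - ((n:ℝ) - 1) • (cutVec n 2 (cS S1) - cutVec n 2 (cS S2))
      = ((n:ℝ)/2) • (Eind z0 z1 - Eind z0 z2) := by
    funext p
    obtain ⟨⟨a,b⟩, hab⟩ := p
    have hab' : a.1 < b.1 := hab
    have hmSa : ∀ x : Fin n, x ∈ Sa ↔ (x.1 = 0 ∨ x.1 = 1) := by
      intro x; rw [hSa, hS1]; simp [hz0, hz1, Fin.ext_iff]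
    have hmSb : ∀ x : Fin n, x ∈ Sb ↔ (x.1 = 0 ∨ x.1 = 2) := by
      intro x; rw [hSb, hS2]; simp [hz0, hz2, Fin.ext_iff]
    have hmS1 : ∀ x : Fin n, x ∈ S1 ↔ x.1 = 1 := by
      intro x; rw [hS1]; simp [hz1, Fin.ext_iff]
    have hmS2 : ∀ x : Fin n, x ∈ S2 ↔ x.1 = 2 := by
      intro x; rw [hS2]; simp [hz2, Fin.ext_iff]
    have hez0 : ∀ x : Fin n, (x = z0) ↔ x.1 = 0 := by intro x; rw [hz0, Fin.ext_iff]
    have hez1 : ∀ x : Fin n, (x = z1) ↔ x.1 = 1 := by intro x; rw [hz1, Fin.ext_iff]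
    have hez2 : ∀ x : Fin n, (x = z2) ↔ x.1 = 2 := by intro x; rw [hz2, Fin.ext_iff]
    have hc1 : ((n - 1 : ℕ) : ℝ) = (n:ℝ) - 1 := by
      rw [Nat.cast_sub (by omega)]; norm_num
    have hc2 : ((n - 2 : ℕ) : ℝ) = (n:ℝ) - 2 := by
      rw [Nat.cast_sub (by omega)]; norm_num
    simp only [Pi.sub_apply, Pi.smul_apply, smul_eq_mul, cutVec_cS, Eind,
      hcardSa, hcardSb, hcardS1, hcardS2]
    simp only [hmSa, hmSb, hmS1, hmS2, hez0, hez1, hez2, hc1, hc2]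
    rcases Nat.lt_or_ge b.1 3 with hb3 | hb3
    · have hcases : (a.1 = 0 ∧ b.1 = 1) ∨ (a.1 = 0 ∧ b.1 = 2) ∨ (a.1 = 1 ∧ b.1 = 2) := by
        omega
      rcases hcases with ⟨ha', hb'⟩ | ⟨ha', hb'⟩ | ⟨ha', hb'⟩ <;>
        · simp only [ha', hb']
          norm_num
          try field_simp
          try ring
    · have hbm : ¬(b.1 = 0 ∨ b.1 = 1) := by omega
      have hbm2 : ¬(b.1 = 0 ∨ b.1 = 2) := by omega
      have hb1 : ¬ b.1 = 1 := by omega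
      have hb2 : ¬ b.1 = 2 := by omega
      have hb0 : ¬ b.1 = 0 := by omega
      rcases Nat.lt_or_ge a.1 3 with ha3 | ha3
      · have hcases : a.1 = 0 ∨ a.1 = 1 ∨ a.1 = 2 := by omega
        rcases hcases with ha' | ha' | ha' <;>
          · simp only [ha', hbm, hbm2, hb1, hb2, hb0]
            norm_num
            try field_simp
            try ring
      · have ham : ¬(a.1 = 0 ∨ a.1 = 1) := by omega
        have ham2 : ¬(a.1 = 0 ∨ a.1 = 2) := by omega
        have ha1 : ¬ a.1 = 1 := by omega
        have ha2 : ¬ a.1 = 2 := by omega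
        have ha0 : ¬ a.1 = 0 := by omega
        simp only [ham, ham2, ha1, ha2, ha0, hbm, hbm2, hb1, hb2, hb0]
        norm_num
  rw [key] at hcombo
  have h2 := Submodule.smul_mem (WS n 2) (2/(n:ℝ)) hcombo
  rw [smul_smul] at h2
  have hone : (2/(n:ℝ)) * ((n:ℝ)/2) = 1 := by field_simp
  rw [hone, one_smul] at h2
  exact h2

lemma eq_mk_iff {n : ℕ} (x : Fin n) (m : ℕ) (h : m < n) : (x = ⟨m, h⟩) ↔ x.1 = m := by
  rw [Fin.ext_iff]

def cval (K x : ℕ) : ℕ := min (if x ≤ 1 then 0 else if x = 2 then 1 else x - 1) (K-1)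
def dval (K x : ℕ) : ℕ := min (if x = 0 then 0 else if x = 2 then 0 else if x = 1 then 1 else x - 1) (K-1)

lemma cval_lt {K : ℕ} (hK : 0 < K) (x : ℕ) : cval K x < K := by
  unfold cval; split_ifs <;> (try contradiction) <;> omega
lemma dval_lt {K : ℕ} (hK : 0 < K) (x : ℕ) : dval K x < K := by
  unfold dval; split_ifs <;> (try contradiction) <;> omega
lemma cval_zero_iff {K : ℕ} (hK : 3 ≤ K) (x : ℕ) : cval K x = 0 ↔ x ≤ 1 := by
  unfold cval; split_ifs <;> (try contradiction) <;> omega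
lemma dval_zero_iff {K : ℕ} (hK : 3 ≤ K) (x : ℕ) : dval K x = 0 ↔ (x = 0 ∨ x = 2) := by
  unfold dval; split_ifs <;> (try contradiction) <;> omega
lemma cval_small {K : ℕ} (hK : 3 ≤ K) {x : ℕ} (hx : x ≤ 2) : cval K x ≤ 1 := by
  unfold cval; split_ifs <;> (try contradiction) <;> omega
lemma dval_small {K : ℕ} (hK : 3 ≤ K) {x : ℕ} (hx : x ≤ 2) : dval K x ≤ 1 := by
  unfold dval; split_ifs <;> (try contradiction) <;> omega
lemma cval_big {K : ℕ} (hK : 3 ≤ K) {x : ℕ} (hx : 3 ≤ x) : 2 ≤ cval K x := by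
  unfold cval; split_ifs <;> (try contradiction) <;> omega
lemma dval_big {K : ℕ} (hK : 3 ≤ K) {x : ℕ} (hx : 3 ≤ x) : 2 ≤ dval K x := by
  unfold dval; split_ifs <;> (try contradiction) <;> omega
lemma cval_eq_dval {K : ℕ} (hK : 3 ≤ K) {x : ℕ} (hx : 3 ≤ x) : cval K x = dval K x := by
  unfold cval dval; split_ifs <;> (try contradiction) <;> omega
lemma cval_one {K : ℕ} (hK : 3 ≤ K) : cval K 2 = 1 := by
  unfold cval; split_ifs <;> (try contradiction) <;> omega
lemma dval_one {K : ℕ} (hK : 3 ≤ K) : dval K 1 = 1 := by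
  unfold dval; split_ifs <;> (try contradiction) <;> omega
lemma cval_gen {K : ℕ} (hK : 3 ≤ K) {v : ℕ} (h2 : 2 ≤ v) (hv : v ≤ K - 1) :
    cval K (v+1) = v := by
  unfold cval; split_ifs <;> (try contradiction) <;> omega
lemma dval_gen {K : ℕ} (hK : 3 ≤ K) {v : ℕ} (h2 : 2 ≤ v) (hv : v ≤ K - 1) :
    dval K (v+1) = v := by
  unfold dval; split_ifs <;> (try contradiction) <;> omega
lemma cval_iff_dval {K : ℕ} (hK : 3 ≤ K) {v : ℕ} (h2 : 2 ≤ v) (x : ℕ) :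
    cval K x = v ↔ dval K x = v := by
  unfold cval dval; split_ifs <;> (try contradiction) <;> omega

def cA (n K : ℕ) (hK : 0 < K) : Fin n → Fin K := fun x => ⟨cval K x.1, cval_lt hK x.1⟩
def cB (n K : ℕ) (hK : 0 < K) : Fin n → Fin K := fun x => ⟨dval K x.1, dval_lt hK x.1⟩

lemma cA_surj {n K : ℕ} (hK : 0 < K) (hK3 : 3 ≤ K) (hKn : K ≤ n - 1) (hn : 3 ≤ n) :
    Function.Surjective (cA n K hK) := by
  intro v
  rcases Nat.lt_or_ge v.1 2 with hv | hv
  · rcases Nat.lt_or_ge v.1 1 with hv0 | hv1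
    · exact ⟨⟨0, by omega⟩, Fin.ext (by simpa [cA] using (cval_zero_iff hK3 0).2 (by omega) |>.trans (by omega))⟩
    · refine ⟨⟨2, by omega⟩, Fin.ext ?_⟩
      show cval K 2 = v.1
      rw [cval_one hK3]; omega
  · have hvK : v.1 < K := v.2
    refine ⟨⟨v.1 + 1, by omega⟩, Fin.ext ?_⟩
    show cval K (v.1+1) = v.1
    exact cval_gen hK3 hv (by omega)

lemma cB_surj {n K : ℕ} (hK : 0 < K) (hK3 : 3 ≤ K) (hKn : K ≤ n - 1) (hn : 3 ≤ n) :
    Function.Surjective (cB n K hK) := by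
  intro v
  rcases Nat.lt_or_ge v.1 2 with hv | hv
  · rcases Nat.lt_or_ge v.1 1 with hv0 | hv1
    · refine ⟨⟨0, by omega⟩, Fin.ext ?_⟩
      show dval K 0 = v.1
      have := (dval_zero_iff hK3 0).2 (by omega)
      omega
    · refine ⟨⟨1, by omega⟩, Fin.ext ?_⟩
      show dval K 1 = v.1
      rw [dval_one hK3]; omega
  · have hvK : v.1 < K := v.2
    refine ⟨⟨v.1 + 1, by omega⟩, Fin.ext ?_⟩
    show dval K (v.1+1) = v.1
    exact dval_gen hK3 hv (by omega)

lemma baseK3 {n K : ℕ} (hn : 3 ≤ n) (hK3 : 3 ≤ K) (hKn : K ≤ n - 1) :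
    Eind (⟨0, by omega⟩ : Fin n) ⟨1, by omega⟩ - Eind ⟨0, by omega⟩ ⟨2, by omega⟩ ∈ WS n K := by
  classical
  have hK : 0 < K := by omega
  have key : cutVec n K (cA n K hK) - cutVec n K (cB n K hK)
      = (2:ℝ)⁻¹ • (Eind (⟨0, by omega⟩ : Fin n) ⟨1, by omega⟩
          - Eind (⟨0, by omega⟩ : Fin n) ⟨2, by omega⟩) := by
    funext p
    obtain ⟨⟨a,b⟩, hab⟩ := p
    have hab' : a.1 < b.1 := hab
    have hbn : b.1 < n := b.2
    have hvA : ∀ x : Fin n, (cA n K hK x).1 = cval K x.1 := fun _ => rfl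
    have hvB : ∀ x : Fin n, (cB n K hK x).1 = dval K x.1 := fun _ => rfl
    have hfA0 : a.1 ≤ 1 → (Finset.univ.filter fun i => cA n K hK i = cA n K hK a)
        = {(⟨0, by omega⟩ : Fin n), ⟨1, by omega⟩} := by
      intro hx
      ext y
      simp only [Finset.mem_filter, Finset.mem_univ, true_and, Finset.mem_insert,
        Finset.mem_singleton, Fin.ext_iff, hvA]
      have h1 : cval K a.1 = 0 := (cval_zero_iff hK3 a.1).2 hx
      have h2 := cval_zero_iff hK3 y.1
      show _ ↔ (y.1 = (0:ℕ) ∨ y.1 = (1:ℕ))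
      omega
    have hfB0 : (a.1 = 0 ∨ a.1 = 2) → (Finset.univ.filter fun i => cB n K hK i = cB n K hK a)
        = {(⟨0, by omega⟩ : Fin n), ⟨2, by omega⟩} := by
      intro hx
      ext y
      simp only [Finset.mem_filter, Finset.mem_univ, true_and, Finset.mem_insert,
        Finset.mem_singleton, Fin.ext_iff, hvB]
      have h1 : dval K a.1 = 0 := (dval_zero_iff hK3 a.1).2 hx
      have h2 := dval_zero_iff hK3 y.1
      show _ ↔ (y.1 = (0:ℕ) ∨ y.1 = (2:ℕ))
      omega
    have hcard2A : a.1 ≤ 1 → ((Finset.univ.filter fun i => cA n K hK i = cA n K hK a).card : ℝ) = 2 := by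
      intro hx
      rw [hfA0 hx, Finset.card_insert_of_notMem (by simp [Fin.ext_iff]), Finset.card_singleton]
      norm_num
    have hcard2B : (a.1 = 0 ∨ a.1 = 2) → ((Finset.univ.filter fun i => cB n K hK i = cB n K hK a).card : ℝ) = 2 := by
      intro hx
      rw [hfB0 hx, Finset.card_insert_of_notMem (by simp [Fin.ext_iff]), Finset.card_singleton]
      norm_num
    have hE1 : Eind (⟨0, by omega⟩ : Fin n) ⟨1, by omega⟩ ⟨(a,b), hab⟩
        = if a.1 = 0 ∧ b.1 = 1 then 1 else 0 := by
      simp only [Eind, eq_mk_iff]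
      refine if_congr ?_ rfl rfl
      constructor
      · rintro (⟨h1,h2⟩ | ⟨h1,h2⟩) <;> omega
      · intro h; exact Or.inl h
    have hE2 : Eind (⟨0, by omega⟩ : Fin n) ⟨2, by omega⟩ ⟨(a,b), hab⟩
        = if a.1 = 0 ∧ b.1 = 2 then 1 else 0 := by
      simp only [Eind, eq_mk_iff]
      refine if_congr ?_ rfl rfl
      constructor
      · rintro (⟨h1,h2⟩ | ⟨h1,h2⟩) <;> omega
      · intro h; exact Or.inl h
    simp only [Pi.sub_apply, Pi.smul_apply, smul_eq_mul, hE1, hE2]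
    show (if cA n K hK a = cA n K hK b then
        (1:ℝ) / ((Finset.univ.filter fun i => cA n K hK i = cA n K hK a).card : ℝ) else 0)
      - (if cB n K hK a = cB n K hK b then
        (1:ℝ) / ((Finset.univ.filter fun i => cB n K hK i = cB n K hK a).card : ℝ) else 0)
      = (2:ℝ)⁻¹ * ((if a.1 = 0 ∧ b.1 = 1 then 1 else 0) - (if a.1 = 0 ∧ b.1 = 2 then 1 else 0))
    rcases Nat.lt_or_ge b.1 3 with hb3 | hb3
    · have hcases : (a.1 = 0 ∧ b.1 = 1) ∨ (a.1 = 0 ∧ b.1 = 2) ∨ (a.1 = 1 ∧ b.1 = 2) := by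
        omega
      rcases hcases with ⟨ha', hb'⟩ | ⟨ha', hb'⟩ | ⟨ha', hb'⟩
      · have hccab : cA n K hK a = cA n K hK b := by
          rw [Fin.ext_iff, hvA, hvA, ha', hb']
          rw [(cval_zero_iff hK3 0).2 (by omega), (cval_zero_iff hK3 1).2 (by omega)]
        have hcdab : cB n K hK a ≠ cB n K hK b := by
          rw [Ne, Fin.ext_iff, hvB, hvB, ha', hb']
          rw [(dval_zero_iff hK3 0).2 (by omega), dval_one hK3]
          omega
        rw [if_pos hccab, if_neg hcdab, hcard2A (by omega),
          if_pos ⟨ha', hb'⟩, if_neg (show ¬(a.1 = 0 ∧ b.1 = 2) by omega)]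
        norm_num
      · have hccab : cA n K hK a ≠ cA n K hK b := by
          rw [Ne, Fin.ext_iff, hvA, hvA, ha', hb']
          rw [(cval_zero_iff hK3 0).2 (by omega), cval_one hK3]
          omega
        have hcdab : cB n K hK a = cB n K hK b := by
          rw [Fin.ext_iff, hvB, hvB, ha', hb']
          rw [(dval_zero_iff hK3 0).2 (by omega), (dval_zero_iff hK3 2).2 (by omega)]
        rw [if_neg hccab, if_pos hcdab, hcard2B (by omega),
          if_neg (show ¬(a.1 = 0 ∧ b.1 = 1) by omega), if_pos ⟨ha', hb'⟩]
        norm_num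
      · have hccab : cA n K hK a ≠ cA n K hK b := by
          rw [Ne, Fin.ext_iff, hvA, hvA, ha', hb']
          rw [(cval_zero_iff hK3 1).2 (by omega), cval_one hK3]
          omega
        have hcdab : cB n K hK a ≠ cB n K hK b := by
          rw [Ne, Fin.ext_iff, hvB, hvB, ha', hb']
          rw [dval_one hK3, (dval_zero_iff hK3 2).2 (by omega)]
          omega
        rw [if_neg hccab, if_neg hcdab, if_neg (show ¬(a.1 = 0 ∧ b.1 = 1) by omega),
          if_neg (show ¬(a.1 = 0 ∧ b.1 = 2) by omega)]
        norm_num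
    · rw [if_neg (show ¬(a.1 = 0 ∧ b.1 = 1) by omega),
        if_neg (show ¬(a.1 = 0 ∧ b.1 = 2) by omega)]
      rcases Nat.lt_or_ge a.1 3 with ha3 | ha3
      · have hccab : cA n K hK a ≠ cA n K hK b := by
          rw [Ne, Fin.ext_iff, hvA, hvA]
          have h1 := cval_small hK3 (x := a.1) (by omega)
          have h2 := cval_big hK3 (x := b.1) (by omega)
          omega
        have hcdab : cB n K hK a ≠ cB n K hK b := by
          rw [Ne, Fin.ext_iff, hvB, hvB]
          have h1 := dval_small hK3 (x := a.1) (by omega)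
          have h2 := dval_big hK3 (x := b.1) (by omega)
          omega
        rw [if_neg hccab, if_neg hcdab]
        norm_num
      · have hiff : (cA n K hK a = cA n K hK b) ↔ (cB n K hK a = cB n K hK b) := by
          rw [Fin.ext_iff, Fin.ext_iff, hvA, hvA, hvB, hvB,
            cval_eq_dval hK3 ha3, cval_eq_dval hK3 hb3]
        by_cases hcc' : cA n K hK a = cA n K hK b
        · have hfilter : (Finset.univ.filter fun i => cA n K hK i = cA n K hK a)
              = (Finset.univ.filter fun i => cB n K hK i = cB n K hK a) := by
            ext y
            simp only [Finset.mem_filter, Finset.mem_univ, true_and, Fin.ext_iff, hvA, hvB]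
            rw [← cval_eq_dval hK3 ha3]
            exact cval_iff_dval hK3 (cval_big hK3 ha3) y.1
          rw [if_pos hcc', if_pos (hiff.1 hcc'), hfilter]
          norm_num
        · rw [if_neg hcc', if_neg (fun h => hcc' (hiff.2 h))]
          norm_num
  have hmem := vsub_mem_WS (cA_surj hK hK3 hKn hn) (cB_surj hK hK3 hKn hn)
  rw [key] at hmem
  have h2 := Submodule.smul_mem (WS n K) (2:ℝ) hmem
  rw [smul_smul] at h2
  norm_num at h2
  exact h2


lemma swapE {n K : ℕ} (hn : 3 ≤ n) (hK2 : 2 ≤ K) (hKn : K ≤ n - 1)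
    (i j k : Fin n) (hij : i ≠ j) (hik : i ≠ k) (hjk : j ≠ k) :
    Eind i j - Eind i k ∈ WS n K := by
  obtain ⟨ρ, h0, h1, h2⟩ := exists_perm hn i j k hij hik hjk
  have hbase : Eind (⟨0, by omega⟩ : Fin n) ⟨1, by omega⟩
      - Eind (⟨0, by omega⟩ : Fin n) ⟨2, by omega⟩ ∈ WS n K := by
    rcases eq_or_lt_of_le hK2 with hK2' | hK3
    · rw [← hK2']
      exact baseK2 hn
    · exact baseK3 hn (by omega) hKn
  have hT := WS_invariant ρ hbase
  rw [map_sub, funLeft_Eind, funLeft_Eind] at hT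
  have e0 : ρ.symm ⟨0, by omega⟩ = i := (Equiv.symm_apply_eq ρ).2 h0.symm
  have e1 : ρ.symm ⟨1, by omega⟩ = j := (Equiv.symm_apply_eq ρ).2 h1.symm
  have e2 : ρ.symm ⟨2, by omega⟩ = k := (Equiv.symm_apply_eq ρ).2 h2.symm
  rwa [e0, e1, e2] at hT

lemma single_sub_single_mem {n K : ℕ} (hn : 3 ≤ n) (hK2 : 2 ≤ K) (hKn : K ≤ n - 1)
    (p q : PairIdx n) : Pi.single p (1:ℝ) - Pi.single q 1 ∈ WS n K := by
  obtain ⟨⟨i,j⟩, hij⟩ := p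
  obtain ⟨⟨k,l⟩, hkl⟩ := q
  rw [← Eind_eq_single i j hij, ← Eind_eq_single k l hkl]
  by_cases hik : i = k
  · subst hik
    by_cases hjl : j = l
    · subst hjl; rw [sub_self]; exact Submodule.zero_mem _
    · exact swapE hn hK2 hKn i j l (ne_of_lt hij) (ne_of_lt hkl) hjl
  · by_cases hjl : j = l
    · subst hjl
      rw [Eind_comm i j, Eind_comm k j]
      exact swapE hn hK2 hKn j i k (ne_of_lt hij).symm (ne_of_lt hkl).symm hik
    · by_cases hjk : j = k
      · subst hjk
        rw [Eind_comm i j]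
        exact swapE hn hK2 hKn j i l (ne_of_lt hij).symm (ne_of_lt hkl)
          (ne_of_lt (hij.trans hkl))
      · by_cases hil : i = l
        · subst hil
          rw [Eind_comm k i]
          exact swapE hn hK2 hKn i j k (ne_of_lt hij) hik
            (ne_of_lt (hkl.trans hij)).symm
        · have step1 : Eind i j - Eind i k ∈ WS n K :=
            swapE hn hK2 hKn i j k (ne_of_lt hij) hik hjk
          have step2 : Eind i k - Eind k l ∈ WS n K := by
            rw [Eind_comm i k]
            exact swapE hn hK2 hKn k i l (fun h => hik h.symm) (ne_of_lt hkl) hil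
          have := Submodule.add_mem _ step1 step2
          simpa using this

lemma ker_le_WS {n K : ℕ} (hn : 3 ≤ n) (hK2 : 2 ≤ K) (hKn : K ≤ n - 1) :
    LinearMap.ker (fsum n) ≤ WS n K := by
  intro X hX
  have hX0 : ∑ p : PairIdx n, X p = 0 := hX
  have hlt : ((⟨0, by omega⟩ : Fin n), (⟨1, by omega⟩ : Fin n)).1
      < ((⟨0, by omega⟩ : Fin n), (⟨1, by omega⟩ : Fin n)).2 := by
    rw [Fin.lt_def]; norm_num
  set p0 : PairIdx n := ⟨((⟨0, by omega⟩ : Fin n), (⟨1, by omega⟩ : Fin n)), hlt⟩ with hp0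
  have h1 : ∑ p : PairIdx n, X p • (Pi.single p 1 : CutSpace n) = X := by
    funext q
    rw [Finset.sum_apply]
    simp [Pi.single_apply]
  have hXrep : X = ∑ p : PairIdx n, X p • ((Pi.single p 1 : CutSpace n) - Pi.single p0 1) := by
    have : ∑ p : PairIdx n, X p • ((Pi.single p 1 : CutSpace n) - Pi.single p0 1)
        = (∑ p : PairIdx n, X p • (Pi.single p 1 : CutSpace n))
          - (∑ p : PairIdx n, X p) • (Pi.single p0 1 : CutSpace n) := by
      simp only [smul_sub]
      rw [Finset.sum_sub_distrib, ← Finset.sum_smul]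
    rw [this, hX0, zero_smul, sub_zero, h1]
  rw [hXrep]
  exact Submodule.sum_mem _
    (fun p _ => Submodule.smul_mem _ _ (single_sub_single_mem hn hK2 hKn p p0))

end RC

/-- for n ≥ 3 and 2 ≤ K ≤ n, the inequality ∑_{i<j} X_{ij} ≥ (n−K)/2
defines a facet of RCut^K_n — the face where it is tight has affine dimension
n(n−1)/2 − 1 — if and only if K ≤ n−1. -/
theorem stmt3 (n K : ℕ) (hn : 3 ≤ n) (hK2 : 2 ≤ K) (hKn : K ≤ n) :
    (Module.finrank ℝ
        (affineSpan ℝ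
          {X ∈ RCut n K | ∑ p : PairIdx n, X p = ((n : ℝ) - K) / 2}).direction =
      n * (n - 1) / 2 - 1) ↔ K ≤ n - 1 := by
  classical
  set F := {X ∈ RCut n K | ∑ p : PairIdx n, X p = ((n : ℝ) - K) / 2} with hF
  have hprod : 3 * 2 ≤ n * (n - 1) := Nat.mul_le_mul hn (by omega)
  rcases Nat.lt_or_ge K n with hKlt | hKge
  · -- K ≤ n - 1 : the face has full dimension N - 1
    have hKn1 : K ≤ n - 1 := by omega
    have hsub : RC.Vset n K ⊆ F := by
      rintro X ⟨c, hc, rfl⟩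
      exact ⟨subset_convexHull ℝ _ ⟨c, rfl⟩, RC.sum_cutVec_surj c hc⟩
    have hup : vectorSpan ℝ F ≤ LinearMap.ker (RC.fsum n) := by
      rw [vectorSpan_def]
      apply Submodule.span_le.2
      rintro y ⟨u, hu, v, hv, rfl⟩
      have h1 : RC.fsum n u = ((n:ℝ)-K)/2 := hu.2
      have h2 : RC.fsum n v = ((n:ℝ)-K)/2 := hv.2
      have : RC.fsum n (u -ᵥ v) = 0 := by
        rw [vsub_eq_sub, map_sub, h1, h2, sub_self]
      exact this
    have hdown : LinearMap.ker (RC.fsum n) ≤ vectorSpan ℝ F :=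
      le_trans (RC.ker_le_WS hn hK2 hKn1) (vectorSpan_mono ℝ hsub)
    have heq : vectorSpan ℝ F = LinearMap.ker (RC.fsum n) := le_antisymm hup hdown
    have hp0 : PairIdx n := ⟨(⟨0, by omega⟩, ⟨1, by omega⟩), by rw [Fin.lt_def]; norm_num⟩
    have hrange : LinearMap.range (RC.fsum n) = ⊤ := by
      rw [LinearMap.range_eq_top]
      intro r
      refine ⟨r • (Pi.single hp0 1 : CutSpace n), ?_⟩
      rw [map_smul]
      have hone : RC.fsum n (Pi.single hp0 1) = 1 := by
        show ∑ p : PairIdx n, Pi.single hp0 (1:ℝ) p = 1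
        simp [Pi.single_apply]
      rw [hone]; simp
    have hrank := LinearMap.finrank_range_add_finrank_ker (RC.fsum n)
    rw [hrange, finrank_top, Module.finrank_self, Module.finrank_fintype_fun_eq_card] at hrank
    have hkerrank : Module.finrank ℝ (LinearMap.ker (RC.fsum n))
        = n * (n - 1) / 2 - 1 := by
      rw [RC.card_pairIdx] at hrank
      omega
    rw [direction_affineSpan, heq, hkerrank]
    exact iff_of_true rfl (by omega)
  · -- K = n : the face is {0}
    have hKeq : n = K := le_antisymm hKge hKn
    subst hKeq
    have hF0 : F = {0} := by
      apply Set.eq_singleton_iff_unique_mem.2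
      constructor
      · refine ⟨?_, by simp⟩
        apply subset_convexHull ℝ _
        refine ⟨fun i => i, ?_⟩
        funext p
        simp only [cutVec, Pi.zero_apply]
        rw [if_neg (ne_of_lt p.2)]
      · intro X hX
        have hnn : ∀ p : PairIdx n, 0 ≤ X p := by
          have hgen : {Y : CutSpace n | ∃ c : Fin n → Fin n, Y = cutVec n n c}
              ⊆ Set.univ.pi (fun _ : PairIdx n => Set.Ici (0:ℝ)) := by
            rintro Y ⟨c, rfl⟩ p _
            simp only [cutVec, Set.mem_Ici]
            split_ifs
            · positivity
            · exact le_refl 0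
          have hmem := convexHull_min hgen (convex_pi (fun _ _ => convex_Ici 0)) hX.1
          intro p
          exact hmem p (Set.mem_univ p)
        have hzero : ∑ p : PairIdx n, X p = 0 := by rw [hX.2]; simp
        funext p
        have := (Finset.sum_eq_zero_iff_of_nonneg (fun i _ => hnn i)).1 hzero
        exact this p (Finset.mem_univ p)
    rw [hF0, direction_affineSpan, vectorSpan_singleton, finrank_bot]
    exact iff_of_false (by omega) (by omega)
end

section
/- For all integers n ≥ 3 and 2 ≤ K ≤ n, for every l ∈ [n] and every nonempty T ⊆ [n]∖{l}, every ratio-cut vector X of a partition of [n] into at most K nonempty clusters satisfies 2∑_{j∈T} X_{lj} + ∑_{j∈[n]∖(T∪{l})} X_{lj} ≤ 1 + ∑_{i,j∈T, i<j} X_{ij}; hence this inequality holds on all of RCut^K_n. -/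
section Aux

open Finset

variable {n K : ℕ}

lemma ent_add (X Y : CutSpace n) (i j : Fin n) :
    ent (X + Y) i j = ent X i j + ent Y i j := by
  unfold ent; split_ifs <;> simp

lemma ent_smul (a : ℝ) (X : CutSpace n) (i j : Fin n) :
    ent (a • X) i j = a * ent X i j := by
  unfold ent; split_ifs <;> simp

lemma pairSumOn_add (X Y : CutSpace n) (T : Finset (Fin n)) :
    pairSumOn (X + Y) T = pairSumOn X T + pairSumOn Y T := by
  unfold pairSumOn
  rw [← Finset.sum_add_distrib]
  refine Finset.sum_congr rfl fun p _ => ?_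
  split_ifs <;> simp

lemma pairSumOn_smul (a : ℝ) (X : CutSpace n) (T : Finset (Fin n)) :
    pairSumOn (a • X) T = a * pairSumOn X T := by
  unfold pairSumOn
  rw [Finset.mul_sum]
  refine Finset.sum_congr rfl fun p _ => ?_
  split_ifs <;> simp

lemma cutVec_nonneg (c : Fin n → Fin K) (p : PairIdx n) : 0 ≤ cutVec n K c p := by
  unfold cutVec; split_ifs
  · positivity
  · exact le_rfl

lemma ent_cutVec (c : Fin n → Fin K) {i j : Fin n} (hij : i ≠ j) :
    ent (cutVec n K c) i j =
      if c i = c j then (1 : ℝ) / ((Finset.univ.filter fun k => c k = c i).card : ℝ)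
      else 0 := by
  unfold ent cutVec
  rcases lt_trichotomy i j with h | h | h
  · rw [dif_pos h]
  · exact absurd h hij
  · have h' : ¬ i < j := not_lt.mpr h.le
    rw [dif_neg h', dif_pos h]
    by_cases hc : c i = c j
    · rw [if_pos hc.symm, if_pos hc]
      have hcard : (Finset.univ.filter fun k => c k = c j)
          = (Finset.univ.filter fun k => c k = c i) := by
        apply Finset.filter_congr; intro k _; simp [hc]
      rw [hcard]
    · rw [if_neg (fun hh => hc hh.symm), if_neg hc]

/-- A pair index from two distinct elements. -/
def mkPair (i j : Fin n) (h : i ≠ j) : PairIdx n :=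
  if hl : i < j then ⟨(i, j), hl⟩ else ⟨(j, i), h.lt_or_gt.resolve_left hl⟩

lemma apply_mkPair (X : CutSpace n) {i j : Fin n} (h : i ≠ j) :
    X (mkPair i j h) = ent X i j := by
  unfold mkPair ent
  split_ifs with h1 h2
  · rfl
  · rfl
  · exact absurd (h.lt_or_gt.resolve_left h1) h2

lemma mkPair_fst_snd {i j : Fin n} (h : i ≠ j) :
    ((mkPair i j h).1.1 = i ∧ (mkPair i j h).1.2 = j) ∨
    ((mkPair i j h).1.1 = j ∧ (mkPair i j h).1.2 = i) := by
  unfold mkPair; split_ifs <;> simp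

/-- Core combinatorial inequality for a single ratio-cut vector. -/
lemma key_ineq (n K : ℕ) (c : Fin n → Fin K) (l : Fin n) (T : Finset (Fin n))
    (hlT : l ∉ T) :
    2 * ∑ j ∈ T, ent (cutVec n K c) l j
      + ∑ j ∈ Finset.univ \ insert l T, ent (cutVec n K c) l j
      ≤ 1 + pairSumOn (cutVec n K c) T := by
  classical
  set X := cutVec n K c with hX
  set P : Fin n → Prop := fun i => c i = c l with hP
  set m : ℕ := (Finset.univ.filter fun i => c i = c l).card with hmdef
  have hlm : l ∈ Finset.univ.filter fun i => c i = c l := by simp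
  have hm1 : 1 ≤ m := Finset.card_pos.mpr ⟨l, hlm⟩
  have hmpos : (0 : ℝ) < (m : ℝ) := by exact_mod_cast hm1.trans_lt' (by norm_num)
  set S : Finset (Fin n) := T.filter fun j => c j = c l with hSdef
  set B : Finset (Fin n) := (Finset.univ \ insert l T).filter fun j => c j = c l
    with hBdef
  set a : ℕ := S.card with hadef
  set b : ℕ := B.card with hbdef
  -- the cluster of l decomposes
  have hsplit : m = a + b + 1 := by
    have hUnion : Finset.univ = insert l T ∪ (Finset.univ \ insert l T) := by
      rw [Finset.union_sdiff_of_subset (Finset.subset_univ _)]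
    have hfil : (Finset.univ.filter fun i => c i = c l)
        = ((insert l T).filter fun i => c i = c l) ∪ B := by
      rw [hBdef, ← Finset.filter_union, ← hUnion]
    have hdisj : Disjoint ((insert l T).filter fun i => c i = c l) B :=
      Finset.disjoint_filter_filter Finset.disjoint_sdiff
    have hins : ((insert l T).filter fun i => c i = c l) = insert l S := by
      rw [Finset.filter_insert, if_pos rfl, hSdef]
    have hlS : l ∉ S := fun h => hlT (Finset.mem_of_mem_filter l h)
    rw [hmdef, hfil, Finset.card_union_of_disjoint hdisj, hins,
      Finset.card_insert_of_notMem hlS]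
    omega
  -- sums of entries
  have hentT : ∀ j ∈ T, ent X l j = if c j = c l then (1 : ℝ) / m else 0 := by
    intro j hj
    have hlj : l ≠ j := fun h => hlT (h ▸ hj)
    rw [hX, ent_cutVec c hlj]
    by_cases hc : c j = c l
    · rw [if_pos hc.symm, if_pos hc]
    · rw [if_neg (fun hh => hc hh.symm), if_neg hc]
  have hentB : ∀ j ∈ Finset.univ \ insert l T,
      ent X l j = if c j = c l then (1 : ℝ) / m else 0 := by
    intro j hj
    have hlj : l ≠ j := by
      intro h
      rw [← h] at hj
      exact (Finset.mem_sdiff.mp hj).2 (Finset.mem_insert_self l T)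
    rw [hX, ent_cutVec c hlj]
    by_cases hc : c j = c l
    · rw [if_pos hc.symm, if_pos hc]
    · rw [if_neg (fun hh => hc hh.symm), if_neg hc]
  have hA : ∑ j ∈ T, ent X l j = (a : ℝ) / m := by
    rw [Finset.sum_congr rfl hentT, ← Finset.sum_filter, ← hSdef,
      Finset.sum_const, ← hadef, nsmul_eq_mul, mul_one_div]
  have hB : ∑ j ∈ Finset.univ \ insert l T, ent X l j = (b : ℝ) / m := by
    rw [Finset.sum_congr rfl hentB, ← Finset.sum_filter, ← hBdef,
      Finset.sum_const, ← hbdef, nsmul_eq_mul, mul_one_div]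
  have hps_nonneg : 0 ≤ pairSumOn X T := by
    refine Finset.sum_nonneg fun p _ => ?_
    split_ifs
    · exact cutVec_nonneg c p
    · exact le_rfl
  rcases S.eq_empty_or_nonempty with hS | ⟨s0, hs0⟩
  · -- a = 0
    have ha0 : a = 0 := by rw [hadef, hS, Finset.card_empty]
    rw [hA, hB, ha0]
    have hble : (b : ℝ) ≤ m := by
      have : b ≤ m := by omega
      exact_mod_cast this
    have : (b : ℝ) / m ≤ 1 := by
      rw [div_le_one hmpos]; exact hble
    push_cast
    rw [zero_div]
    linarith
  · -- a ≥ 1 : lower bound on pairSumOn using pairs {s0, j}, j ∈ S \ {s0}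
    have hs0T : s0 ∈ T := Finset.mem_of_mem_filter s0 hs0
    have hs0c : c s0 = c l := (Finset.mem_filter.mp hs0).2
    have ha1 : 1 ≤ a := Finset.card_pos.mpr ⟨s0, hs0⟩
    have hne : ∀ j : {x // x ∈ S.erase s0}, s0 ≠ j.1 := fun j =>
      fun h => (Finset.mem_erase.mp j.2).1 h.symm
    set g : {x // x ∈ S.erase s0} → PairIdx n := fun j => mkPair s0 j.1 (hne j)
      with hg
    have hginj : Function.Injective g := by
      intro x y hxy
      have hxy' : mkPair s0 x.1 (hne x) = mkPair s0 y.1 (hne y) := hxy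
      apply Subtype.ext
      have e1 : (mkPair s0 x.1 (hne x)).1.1 = (mkPair s0 y.1 (hne y)).1.1 :=
        congrArg (fun p : PairIdx n => p.1.1) hxy'
      have e2 : (mkPair s0 x.1 (hne x)).1.2 = (mkPair s0 y.1 (hne y)).1.2 :=
        congrArg (fun p : PairIdx n => p.1.2) hxy'
      rcases mkPair_fst_snd (hne x) with ⟨h1, h2⟩ | ⟨h1, h2⟩ <;>
        rcases mkPair_fst_snd (hne y) with ⟨h3, h4⟩ | ⟨h3, h4⟩
      · exact h2.symm.trans (e2.trans h4)
      · exact absurd (h1.symm.trans (e1.trans h3)) (hne y)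
      · exact absurd (h3.symm.trans (e1.symm.trans h1)) (hne x)
      · exact h1.symm.trans (e1.trans h3)
    have hQsub : (S.erase s0).attach.image g ⊆ Finset.univ := Finset.subset_univ _
    have hlower : ((a : ℝ) - 1) / m ≤ pairSumOn X T := by
      have hstep : ∑ p ∈ (S.erase s0).attach.image g,
          (if p.1.1 ∈ T ∧ p.1.2 ∈ T then X p else 0) ≤ pairSumOn X T := by
        unfold pairSumOn
        refine Finset.sum_le_sum_of_subset_of_nonneg hQsub fun p _ _ => ?_
        split_ifs
        · exact cutVec_nonneg c p
        · exact le_rfl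
      have himg : ∑ p ∈ (S.erase s0).attach.image g,
          (if p.1.1 ∈ T ∧ p.1.2 ∈ T then X p else 0)
          = ∑ j ∈ (S.erase s0).attach,
            (if (g j).1.1 ∈ T ∧ (g j).1.2 ∈ T then X (g j) else 0) :=
        Finset.sum_image fun x _ y _ h => hginj h
      have hterm : ∀ j ∈ (S.erase s0).attach,
          (if (g j).1.1 ∈ T ∧ (g j).1.2 ∈ T then X (g j) else 0) = (1 : ℝ) / m := by
        intro j _
        have hjT : j.1 ∈ T :=
          Finset.mem_of_mem_filter j.1 (Finset.mem_of_mem_erase j.2)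
        have hjc : c j.1 = c l :=
          (Finset.mem_filter.mp (Finset.mem_of_mem_erase j.2)).2
        have hmem : (g j).1.1 ∈ T ∧ (g j).1.2 ∈ T := by
          show (mkPair s0 j.1 (hne j)).1.1 ∈ T ∧ (mkPair s0 j.1 (hne j)).1.2 ∈ T
          rcases mkPair_fst_snd (hne j) with ⟨h1, h2⟩ | ⟨h1, h2⟩ <;>
            rw [h1, h2] <;> exact ⟨by assumption, by assumption⟩
        rw [if_pos hmem]
        show X (mkPair s0 j.1 (hne j)) = (1 : ℝ) / m
        rw [apply_mkPair X (hne j), hX, ent_cutVec c (hne j), if_pos (by rw [hs0c, hjc]),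
          hs0c, ← hmdef]
      have hcount : ∑ j ∈ (S.erase s0).attach, ((1 : ℝ) / m) = ((a : ℝ) - 1) / m := by
        rw [Finset.sum_const, Finset.card_attach, Finset.card_erase_of_mem hs0,
          nsmul_eq_mul, mul_one_div, ← hadef, Nat.cast_sub ha1, Nat.cast_one]
      calc ((a : ℝ) - 1) / m
          = ∑ j ∈ (S.erase s0).attach, ((1 : ℝ) / m) := hcount.symm
        _ = ∑ j ∈ (S.erase s0).attach,
              (if (g j).1.1 ∈ T ∧ (g j).1.2 ∈ T then X (g j) else 0) :=
            (Finset.sum_congr rfl hterm).symm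
        _ = ∑ p ∈ (S.erase s0).attach.image g,
              (if p.1.1 ∈ T ∧ p.1.2 ∈ T then X p else 0) := himg.symm
        _ ≤ pairSumOn X T := hstep
    rw [hA, hB]
    have hmr : (m : ℝ) = (a : ℝ) + b + 1 := by exact_mod_cast hsplit
    have heq : 2 * ((a : ℝ) / m) + (b : ℝ) / m = 1 + ((a : ℝ) - 1) / m := by
      field_simp
      linarith [hmr]
    linarith

end Aux

/-- for n ≥ 3, 2 ≤ K ≤ n, l ∈ [n] and nonempty T ⊆ [n]∖{l}, the
inequality 2∑_{j∈T} X_{lj} + ∑_{j∉T∪{l}} X_{lj} ≤ 1 + ∑_{i<j∈T} X_{ij} holds on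
all of RCut^K_n (in particular for every ratio-cut vector of a partition of [n]
into at most K nonempty clusters). -/
theorem stmt4 (n K : ℕ) (hn : 3 ≤ n) (hK2 : 2 ≤ K) (hKn : K ≤ n)
    (l : Fin n) (T : Finset (Fin n)) (hlT : l ∉ T) (hT : T.Nonempty) :
    ∀ X ∈ RCut n K,
      2 * ∑ j ∈ T, ent X l j + ∑ j ∈ Finset.univ \ insert l T, ent X l j
        ≤ 1 + pairSumOn X T := by
  have hconv : Convex ℝ {X : CutSpace n |
      2 * ∑ j ∈ T, ent X l j + ∑ j ∈ Finset.univ \ insert l T, ent X l j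
        ≤ 1 + pairSumOn X T} := by
    intro Y hY Z hZ p q hp hq hpq
    simp only [Set.mem_setOf_eq] at hY hZ ⊢
    have e1 : ∀ i j, ent (p • Y + q • Z) i j = p * ent Y i j + q * ent Z i j :=
      fun i j => by rw [ent_add, ent_smul, ent_smul]
    have e2 : pairSumOn (p • Y + q • Z) T = p * pairSumOn Y T + q * pairSumOn Z T := by
      rw [pairSumOn_add, pairSumOn_smul, pairSumOn_smul]
    simp only [e1, e2, Finset.sum_add_distrib, ← Finset.mul_sum]
    nlinarith [mul_le_mul_of_nonneg_left hY hp, mul_le_mul_of_nonneg_left hZ hq]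
  intro X hX
  refine convexHull_min ?_ hconv hX
  rintro Y ⟨c, rfl⟩
  exact key_ineq n K c l T hlT
end

section
/- Let n ≥ 3 and 2 ≤ K ≤ n be integers, let i ≠ j ∈ [n], and let T ⊆ [n]∖{i,j} with |T| ≥ 2. For X ∈ ℝ^{n(n−1)/2} write X_{ii} := 1 − ∑_{k∈[n]∖{i}} X_{ik} and X_{jj} := 1 − ∑_{k∈[n]∖{j}} X_{jk}. Then every point X of RCut^K_n satisfies ∑_{k∈T} (X_{ik} + X_{jk}) − X_{ij} ≤ X_{ii} + X_{jj} + ∑_{k,l∈T, k<l} X_{kl}. -/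
lemma ent_symm {n : ℕ} (X : CutSpace n) (u v : Fin n) : ent X u v = ent X v u := by
  unfold ent; split_ifs <;> first | rfl | omega

lemma ent_diag {n : ℕ} (X : CutSpace n) (u : Fin n) : ent X u u = 0 := by
  simp [ent]

lemma ent_comb {n : ℕ} (a b : ℝ) (X Y : CutSpace n) (u v : Fin n) :
    ent (a • X + b • Y) u v = a * ent X u v + b * ent Y u v := by
  unfold ent; split_ifs <;> simp

lemma pairSumOn_comb {n : ℕ} (a b : ℝ) (X Y : CutSpace n) (T : Finset (Fin n)) :
    pairSumOn (a • X + b • Y) T = a * pairSumOn X T + b * pairSumOn Y T := by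
  unfold pairSumOn
  rw [Finset.mul_sum, Finset.mul_sum, ← Finset.sum_add_distrib]
  apply Finset.sum_congr rfl; intro p _; split_ifs <;> simp

lemma pairSumOn_eq {n : ℕ} (X : CutSpace n) (S : Finset (Fin n)) :
    pairSumOn X S = ∑ q ∈ (S ×ˢ S).filter (fun q => q.1 < q.2), ent X q.1 q.2 := by
  have h1 : pairSumOn X S
      = ∑ q ∈ Finset.univ.filter (fun q : Fin n × Fin n => q.1 < q.2),
          (if q.1 ∈ S ∧ q.2 ∈ S then ent X q.1 q.2 else 0) := by
    rw [Finset.sum_subtype (p := fun q : Fin n × Fin n => q.1 < q.2)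
      (Finset.univ.filter (fun q : Fin n × Fin n => q.1 < q.2))
      (by simp) (fun q => if q.1 ∈ S ∧ q.2 ∈ S then ent X q.1 q.2 else 0)]
    apply Finset.sum_congr rfl; intro p _
    have hp := p.2
    simp only [ent, dif_pos hp]
  rw [h1]
  rw [← Finset.sum_subset (s₁ := (S ×ˢ S).filter (fun q => q.1 < q.2))]
  · apply Finset.sum_congr rfl; intro q hq
    simp only [Finset.mem_filter, Finset.mem_product] at hq
    rw [if_pos ⟨hq.1.1, hq.1.2⟩]
  · intro q hq; simp only [Finset.mem_filter, Finset.mem_product] at *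
    exact ⟨Finset.mem_univ _, hq.2⟩
  · intro q _ hq; simp only [Finset.mem_filter, Finset.mem_product, Finset.mem_univ,
      true_and] at *
    rw [if_neg]; intro h; exact hq ⟨⟨h.1, h.2⟩, ‹_›⟩

lemma sum_pairs {n : ℕ} (X : CutSpace n) (S : Finset (Fin n)) :
    ∑ u ∈ S, ∑ v ∈ S, ent X u v
      = 2 * ∑ q ∈ (S ×ˢ S).filter (fun q => q.1 < q.2), ent X q.1 q.2 := by
  rw [← Finset.sum_product']
  rw [← Finset.sum_filter_add_sum_filter_not (S ×ˢ S) (fun q => q.1 < q.2)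
    (fun q => ent X q.1 q.2)]
  have h2 : ∑ q ∈ (S ×ˢ S).filter (fun q => ¬ q.1 < q.2), ent X q.1 q.2
      = ∑ q ∈ (S ×ˢ S).filter (fun q => q.2 < q.1), ent X q.1 q.2 := by
    rw [← Finset.sum_subset]
    · intro q hq
      simp only [Finset.mem_filter] at *
      exact ⟨hq.1, not_lt_of_gt hq.2⟩
    · intro q hq hq'
      simp only [Finset.mem_filter] at *
      have : q.1 = q.2 := le_antisymm (not_lt.mp (fun h => hq' ⟨hq.1, h⟩)) (not_lt.mp hq.2)
      rw [show q.1 = q.2 from this, ent_diag]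
  have h3 : ∑ q ∈ (S ×ˢ S).filter (fun q => q.2 < q.1), ent X q.1 q.2
      = ∑ q ∈ (S ×ˢ S).filter (fun q => q.1 < q.2), ent X q.1 q.2 := by
    apply Finset.sum_nbij' (i := Prod.swap) (j := Prod.swap)
    · intro q hq; simp only [Finset.mem_filter, Finset.mem_product] at *
      exact ⟨⟨hq.1.2, hq.1.1⟩, hq.2⟩
    · intro q hq; simp only [Finset.mem_filter, Finset.mem_product] at *
      exact ⟨⟨hq.1.2, hq.1.1⟩, hq.2⟩
    · intro q _; simp
    · intro q _; simp
    · intro q _; exact ent_symm X q.1 q.2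
  rw [h2, h3]; ring

section Vertex
variable {n K : ℕ} (c : Fin n → Fin K)

def clSize (v : Fin n) : ℕ := (Finset.univ.filter fun i => c i = c v).card

lemma clSize_pos (v : Fin n) : 0 < clSize c v := by
  apply Finset.card_pos.mpr ⟨v, by simp [clSize]⟩

lemma clSize_congr {u v : Fin n} (h : c u = c v) : clSize c u = clSize c v := by
  unfold clSize; rw [h]

lemma ent_cutVec_s8 {u v : Fin n} (huv : u ≠ v) :
    ent (cutVec n K c) u v = if c u = c v then 1 / (clSize c u : ℝ) else 0 := by
  unfold ent cutVec clSize
  rcases lt_trichotomy u v with h | h | h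
  · rw [dif_pos h]
  · exact absurd h huv
  · rw [dif_neg (by omega), dif_pos h]
    by_cases hc : c u = c v
    · rw [if_pos hc.symm, if_pos hc, hc]
    · rw [if_neg (fun h => hc h.symm), if_neg hc]

lemma rowSum_cutVec (i : Fin n) (S : Finset (Fin n)) (hiS : i ∉ S) :
    ∑ k ∈ S, ent (cutVec n K c) i k
      = ((S.filter fun k => c i = c k).card : ℝ) / (clSize c i : ℝ) := by
  have : ∀ k ∈ S, ent (cutVec n K c) i k = if c i = c k then 1 / (clSize c i : ℝ) else 0 := by
    intro k hk
    exact ent_cutVec_s8 c (fun h => hiS (h ▸ hk))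
  rw [Finset.sum_congr rfl this, ← Finset.sum_filter, Finset.sum_const, nsmul_eq_mul]
  ring

lemma rowSum_erase (i : Fin n) :
    ∑ k ∈ Finset.univ.erase i, ent (cutVec n K c) i k
      = ((clSize c i : ℝ) - 1) / (clSize c i : ℝ) := by
  rw [rowSum_cutVec c i _ (Finset.notMem_erase i _)]
  congr 1
  have : (Finset.univ.erase i).filter (fun k => c i = c k)
      = (Finset.univ.filter fun k => c k = c i).erase i := by
    ext k; simp [eq_comm, and_comm]
  rw [this, Finset.card_erase_of_mem (by simp)]
  have := clSize_pos c i
  unfold clSize at *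
  push_cast [Nat.cast_sub (by omega : 1 ≤ (Finset.univ.filter fun k => c k = c i).card)]
  ring_nf

lemma cluster_pairs (i : Fin n) (A : Finset (Fin n)) (hA : ∀ k ∈ A, c k = c i) :
    2 * ∑ q ∈ (A ×ˢ A).filter (fun q => q.1 < q.2), ent (cutVec n K c) q.1 q.2
      = ((A.card : ℝ) * ((A.card : ℝ) - 1)) / (clSize c i : ℝ) := by
  rw [← sum_pairs]
  have key : ∀ u ∈ A, ∑ v ∈ A, ent (cutVec n K c) u v
      = ((A.card : ℝ) - 1) / (clSize c i : ℝ) := by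
    intro u hu
    rw [← Finset.add_sum_erase A _ hu, ent_diag, zero_add,
      rowSum_cutVec c u _ (Finset.notMem_erase u _)]
    have hfil : (A.erase u).filter (fun k => c u = c k) = A.erase u := by
      apply Finset.filter_true_of_mem
      intro k hk
      rw [hA u hu, hA k (Finset.mem_of_mem_erase hk)]
    rw [hfil, Finset.card_erase_of_mem hu, clSize_congr c (hA u hu)]
    have : 1 ≤ A.card := Finset.card_pos.mpr ⟨u, hu⟩
    push_cast [Nat.cast_sub this]
    ring
  rw [Finset.sum_congr rfl key, Finset.sum_const, nsmul_eq_mul]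
  ring

lemma ent_cutVec_nonneg (u v : Fin n) : 0 ≤ ent (cutVec n K c) u v := by
  unfold ent cutVec; split_ifs <;> positivity

lemma arith1 (t PA : ℝ) (ht : 0 ≤ t) (a : ℕ)
    (hPA : 2 * PA = (a : ℝ) * ((a : ℝ) - 1) * t) :
    (a : ℝ) * t ≤ t + PA := by
  have h : 0 ≤ ((a : ℝ) - 1) * ((a : ℝ) - 2) := by
    rcases le_or_gt a 1 with h | h
    · have : (a : ℝ) ≤ 1 := by exact_mod_cast h
      nlinarith
    · have : (2 : ℝ) ≤ (a : ℝ) := by exact_mod_cast h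
      nlinarith
  nlinarith [mul_nonneg h ht]

lemma arith2 (t PA : ℝ) (ht : 0 ≤ t) (a : ℕ)
    (hPA : 2 * PA = (a : ℝ) * ((a : ℝ) - 1) * t) :
    2 * (a : ℝ) * t - t ≤ 2 * t + PA := by
  have h : 0 ≤ ((a : ℝ) - 2) * ((a : ℝ) - 3) := by
    rcases le_or_gt a 2 with h | h
    · have : (a : ℝ) ≤ 2 := by exact_mod_cast h
      nlinarith
    · have : (3 : ℝ) ≤ (a : ℝ) := by exact_mod_cast h
      nlinarith
  nlinarith [mul_nonneg h ht]

lemma vertex (i j : Fin n) (hij : i ≠ j) (T : Finset (Fin n)) (hiT : i ∉ T) (hjT : j ∉ T) :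
    (∑ k ∈ T, (ent (cutVec n K c) i k + ent (cutVec n K c) j k)) - ent (cutVec n K c) i j
      ≤ (1 - ∑ k ∈ Finset.univ.erase i, ent (cutVec n K c) i k)
        + (1 - ∑ k ∈ Finset.univ.erase j, ent (cutVec n K c) j k)
        + pairSumOn (cutVec n K c) T := by
  set X := cutVec n K c with hX
  have hsi : (0 : ℝ) < (clSize c i : ℝ) := by exact_mod_cast clSize_pos c i
  have hsj : (0 : ℝ) < (clSize c j : ℝ) := by exact_mod_cast clSize_pos c j
  set A := T.filter (fun k => c i = c k) with hA
  set B := T.filter (fun k => c j = c k) with hB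
  have hAmem : ∀ k ∈ A, c k = c i := fun k hk => ((Finset.mem_filter.mp hk).2).symm
  have hBmem : ∀ k ∈ B, c k = c j := fun k hk => ((Finset.mem_filter.mp hk).2).symm
  -- decompose LHS sums
  rw [Finset.sum_add_distrib, rowSum_cutVec c i T hiT, rowSum_cutVec c j T hjT,
    rowSum_erase, rowSum_erase, pairSumOn_eq]
  set PT := ∑ q ∈ (T ×ˢ T).filter (fun q => q.1 < q.2), ent X q.1 q.2 with hPT
  set PA := ∑ q ∈ (A ×ˢ A).filter (fun q => q.1 < q.2), ent X q.1 q.2 with hPAdef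
  set PB := ∑ q ∈ (B ×ˢ B).filter (fun q => q.1 < q.2), ent X q.1 q.2 with hPBdef
  have hPA : 2 * PA = ((A.card : ℝ) * ((A.card : ℝ) - 1)) / (clSize c i : ℝ) :=
    cluster_pairs c i A hAmem
  have hPB : 2 * PB = ((B.card : ℝ) * ((B.card : ℝ) - 1)) / (clSize c j : ℝ) :=
    cluster_pairs c j B hBmem
  have hsub : ∀ S : Finset (Fin n), S ⊆ T →
      (S ×ˢ S).filter (fun q => q.1 < q.2) ⊆ (T ×ˢ T).filter (fun q => q.1 < q.2) := by
    intro S hS q hq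
    simp only [Finset.mem_filter, Finset.mem_product] at *
    exact ⟨⟨hS hq.1.1, hS hq.1.2⟩, hq.2⟩
  have h1 : (1 : ℝ) - ((clSize c i : ℝ) - 1) / (clSize c i : ℝ) = 1 / (clSize c i : ℝ) := by
    field_simp
    ring
  have h2 : (1 : ℝ) - ((clSize c j : ℝ) - 1) / (clSize c j : ℝ) = 1 / (clSize c j : ℝ) := by
    field_simp
    ring
  rw [h1, h2]
  have hentij : ent X i j = if c i = c j then 1 / (clSize c i : ℝ) else 0 :=
    ent_cutVec_s8 c hij
  by_cases hc : c i = c j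
  · -- same cluster
    have hBA : B = A := by rw [hA, hB, hc]
    have hss : clSize c j = clSize c i := clSize_congr c hc.symm
    have hPTA : PA ≤ PT := by
      apply Finset.sum_le_sum_of_subset_of_nonneg
        (hsub A (Finset.filter_subset _ _))
      intro q _ _; exact ent_cutVec_nonneg c q.1 q.2
    rw [← hA, ← hB, hentij, if_pos hc, hBA, hss]
    have := arith2 (1 / (clSize c i : ℝ)) PA (by positivity) A.card
      (by rw [hPA]; field_simp; try ring)
    have hd : ∀ m : ℕ, (m : ℝ) / (clSize c i : ℝ) = (m : ℝ) * (1 / (clSize c i : ℝ)) := by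
      intro m; ring
    simp only [hd]
    linarith
  · -- different clusters
    have hdisj : Disjoint A B := by
      rw [Finset.disjoint_left]
      intro k hkA hkB
      exact hc ((hAmem k hkA).symm.trans (hBmem k hkB))
    have hdisj2 : Disjoint ((A ×ˢ A).filter (fun q => q.1 < q.2))
        ((B ×ˢ B).filter (fun q => q.1 < q.2)) := by
      rw [Finset.disjoint_left]
      intro q hqA hqB
      simp only [Finset.mem_filter, Finset.mem_product] at *
      exact Finset.disjoint_left.mp hdisj hqA.1.1 hqB.1.1
    have hPTAB : PA + PB ≤ PT := by
      rw [← Finset.sum_union hdisj2]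
      apply Finset.sum_le_sum_of_subset_of_nonneg
      · apply Finset.union_subset (hsub A (Finset.filter_subset _ _))
          (hsub B (Finset.filter_subset _ _))
      · intro q _ _; exact ent_cutVec_nonneg c q.1 q.2
    rw [← hA, ← hB, hentij, if_neg hc]
    have hi' := arith1 (1 / (clSize c i : ℝ)) PA (by positivity) A.card
      (by rw [hPA]; field_simp; try ring)
    have hj' := arith1 (1 / (clSize c j : ℝ)) PB (by positivity) B.card
      (by rw [hPB]; ring)
    have hdi : (A.card : ℝ) / (clSize c i : ℝ) = (A.card : ℝ) * (1 / (clSize c i : ℝ)) := by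
      ring
    have hdj : (B.card : ℝ) / (clSize c j : ℝ) = (B.card : ℝ) * (1 / (clSize c j : ℝ)) := by
      ring
    rw [hdi, hdj]
    linarith

end Vertex

/-- for i ≠ j and T ⊆ [n]∖{i,j} with |T| ≥ 2, writing
X_{ii} := 1 − ∑_{k≠i} X_{ik} (and similarly for j), every X ∈ RCut^K_n satisfies
∑_{k∈T} (X_{ik} + X_{jk}) − X_{ij} ≤ X_{ii} + X_{jj} + ∑_{k<l∈T} X_{kl}. -/
theorem stmt8 (n K : ℕ) (hn : 3 ≤ n) (hK2 : 2 ≤ K) (hKn : K ≤ n)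
    (i j : Fin n) (hij : i ≠ j) (T : Finset (Fin n)) (hiT : i ∉ T) (hjT : j ∉ T)
    (hT : 2 ≤ T.card) :
    ∀ X ∈ RCut n K,
      (∑ k ∈ T, (ent X i k + ent X j k)) - ent X i j
        ≤ (1 - ∑ k ∈ Finset.univ.erase i, ent X i k)
          + (1 - ∑ k ∈ Finset.univ.erase j, ent X j k)
          + pairSumOn X T := by
  intro X hX
  have hmain : RCut n K ⊆ {Y : CutSpace n |
      (∑ k ∈ T, (ent Y i k + ent Y j k)) - ent Y i j
        ≤ (1 - ∑ k ∈ Finset.univ.erase i, ent Y i k)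
          + (1 - ∑ k ∈ Finset.univ.erase j, ent Y j k)
          + pairSumOn Y T} := by
    apply convexHull_min
    · rintro Y ⟨c, rfl⟩
      exact vertex c i j hij T hiT hjT
    · intro Y hY Z hZ a b ha hb hab
      simp only [Set.mem_setOf_eq] at *
      have e1 : ∀ (u v : Fin n), ent (a • Y + b • Z) u v = a * ent Y u v + b * ent Z u v :=
        ent_comb a b Y Z
      simp only [e1, pairSumOn_comb, Finset.sum_add_distrib, ← Finset.mul_sum]
      simp only [Finset.sum_add_distrib] at hY hZ
      nlinarith [mul_le_mul_of_nonneg_left hY ha, mul_le_mul_of_nonneg_left hZ hb]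
  exact hmain hX
end

section
/- Let n ≥ 3 be an integer and let X ∈ ℝ^{n×n} be a symmetric matrix satisfying ∑_{j=1}^n X_{ij} = 1 for every i ∈ [n] and X_{ij} + X_{ik} ≤ X_{ii} + X_{jk} for all pairwise distinct i, j, k ∈ [n]. Then X_{ij} ≤ X_{ii} for all i ≠ j ∈ [n]. -/
/-- a symmetric matrix with unit row sums satisfying the generalized
triangle inequalities X_{ij} + X_{ik} ≤ X_{ii} + X_{jk} (for pairwise distinct
i, j, k) also satisfies the row-wise dominance X_{ij} ≤ X_{ii} for all i ≠ j. -/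
theorem stmt10 (n : ℕ) (hn : 3 ≤ n) (X : Fin n → Fin n → ℝ)
    (hsymm : ∀ i j, X i j = X j i)
    (hrow : ∀ i, ∑ j, X i j = 1)
    (htri : ∀ i j k : Fin n, i ≠ j → i ≠ k → j ≠ k →
      X i j + X i k ≤ X i i + X j k) :
    ∀ i j : Fin n, i ≠ j → X i j ≤ X i i := by
  have key : ∀ i j : Fin n, i ≠ j →
      ((n : ℝ) - 2) * X i j ≤ ((n : ℝ) - 1) * X i i - X j j := by
    intro i j hij
    set s : Finset (Fin n) := Finset.univ \ {i, j} with hs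
    have hsub : ({i, j} : Finset (Fin n)) ⊆ Finset.univ := Finset.subset_univ _
    have hcard : s.card = n - 2 := by
      rw [hs, Finset.card_sdiff_of_subset hsub, Finset.card_univ, Finset.card_pair hij,
        Fintype.card_fin]
    have hcardR : (s.card : ℝ) = (n : ℝ) - 2 := by
      rw [hcard]
      have : 2 ≤ n := by omega
      push_cast [Nat.cast_sub this]
      ring
    have hpair : ∀ m : Fin n, ∑ k ∈ ({i, j} : Finset (Fin n)), X m k
        = X m i + X m j := fun m => Finset.sum_pair hij
    have hsplit : ∀ m : Fin n, ∑ k ∈ s, X m k = 1 - X m i - X m j := by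
      intro m
      have := Finset.sum_sdiff (f := X m) hsub
      rw [hpair m, hrow m] at this
      linarith
    have hsum : ∑ k ∈ s, (X i j + X i k) ≤ ∑ k ∈ s, (X i i + X j k) := by
      apply Finset.sum_le_sum
      intro k hk
      rw [hs, Finset.mem_sdiff, Finset.mem_insert, Finset.mem_singleton] at hk
      push_neg at hk
      exact htri i j k hij (Ne.symm hk.2.1) (Ne.symm hk.2.2)
    rw [Finset.sum_add_distrib, Finset.sum_add_distrib, Finset.sum_const,
      Finset.sum_const, nsmul_eq_mul, nsmul_eq_mul, hsplit i, hsplit j,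
      hcardR] at hsum
    have hji : X j i = X i j := hsymm j i
    linarith
  intro i j hij
  have h1 := key i j hij
  have h2 := key j i (Ne.symm hij)
  rw [hsymm j i] at h2
  have hN : (3 : ℝ) ≤ (n : ℝ) := by exact_mod_cast hn
  -- from h1 + h2 : (n-2)(X i i + X j j - 2 X i j) ≥ 0, hence X i i + X j j ≥ 2 X i j
  have hab : X i i + X j j - 2 * X i j ≥ 0 := by
    have hpos : (0 : ℝ) < (n : ℝ) - 2 := by linarith
    nlinarith
  nlinarith
end
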